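/- arXiv:2210.06153 — 6 statements merged into one kernel-verified Lean document; each statement's English description precedes it below -/
import Mathlib

section
/- Let a : ℕ → ℂ be a sequence and N ≥ 1 an integer such that the partial sums A(x) = ∑_{n ≤ x} a(n) satisfy A(x) = o((log x)^N) as x → ∞ and A(x) = O((log x)^N). Then ∫₁^∞ |A(x)| / x^(1+σ) dx = o(1/σ^(N+1)) as σ → 0⁺. -/
open Filter Asymptotics MeasureTheory Topology Set

private lemma logpow_le_aux (N : ℕ) (hN : 1 ≤ N) {σ x : ℝ} (hσ : 0 < σ) (hx : 1 ≤ x) :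
    Real.log x ^ N ≤ (2 * N / σ) ^ N * x ^ (σ / 2) := by
  have hx0 : (0:ℝ) ≤ x := by linarith
  have hN0 : (0:ℝ) < N := by exact_mod_cast hN
  have hα : 0 < σ / (2 * N) := by positivity
  have h1 : Real.log x ≤ (2 * N / σ) * x ^ (σ / (2 * N)) := by
    have h := Real.log_le_rpow_div hx0 hα
    calc Real.log x ≤ x ^ (σ / (2 * N)) / (σ / (2 * N)) := h
      _ = (2 * N / σ) * x ^ (σ / (2 * N)) := by
          field_simp
  have h2 : Real.log x ^ N ≤ ((2 * N / σ) * x ^ (σ / (2 * N))) ^ N :=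
    pow_le_pow_left₀ (Real.log_nonneg hx) h1 N
  have h3 : ((2 * N / σ) * x ^ (σ / (2 * N))) ^ N
      = (2 * N / σ) ^ N * x ^ (σ / 2) := by
    rw [mul_pow]
    congr 1
    rw [← Real.rpow_natCast (x ^ (σ / (2 * N))) N, ← Real.rpow_mul hx0]
    congr 1
    field_simp
  linarith [h2, h3.le]

theorem stmt2 (a : ℕ → ℂ) (N : ℕ) (hN : 1 ≤ N)
    (A : ℝ → ℂ) (hA : ∀ x : ℝ, A x = ∑ n ∈ Finset.Icc 1 ⌊x⌋₊, a n)
    (ho : A =o[atTop] fun x : ℝ => (Real.log x) ^ N)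
    (hO : A =O[atTop] fun x : ℝ => (Real.log x) ^ N) :
    (fun σ : ℝ => ∫ x in Set.Ioi (1 : ℝ), ‖A x‖ / x ^ (1 + σ)) =o[𝓝[>] (0 : ℝ)]
      fun σ : ℝ => 1 / σ ^ (N + 1) := by
  have measA : Measurable A := by
    have hAeq : A = (fun k : ℕ => ∑ n ∈ Finset.Icc 1 k, a n) ∘ Nat.floor := by
      funext x; simp [hA, Function.comp]
    rw [hAeq]
    exact measurable_from_top.comp Nat.measurable_floor
  rw [isLittleO_iff]
  intro c hc
  have hN0 : (0:ℝ) < N := by exact_mod_cast hN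
  set ε : ℝ := c / (2 ^ (N + 2) * (N:ℝ) ^ N) with hεdef
  have hεpos : 0 < ε := by positivity
  obtain ⟨T₀, hT₀⟩ := (eventually_atTop.mp (ho.def hεpos))
  set T : ℝ := max T₀ 2 with hTdef
  have hT2 : (2:ℝ) ≤ T := le_max_right _ _
  have hT1 : (1:ℝ) ≤ T := by linarith
  have hTbound : ∀ x : ℝ, T ≤ x → ‖A x‖ ≤ ε * Real.log x ^ N := by
    intro x hx
    have h1x : (1:ℝ) ≤ x := by linarith
    have := hT₀ x (le_trans (le_max_left _ _) hx)
    rwa [norm_pow, Real.norm_eq_abs, abs_of_nonneg (Real.log_nonneg h1x)] at this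
  set M : ℝ := ∑ n ∈ Finset.Icc 1 ⌊T⌋₊, ‖a n‖ with hMdef
  have hM0 : 0 ≤ M := Finset.sum_nonneg fun _ _ => norm_nonneg _
  have hMbound : ∀ x : ℝ, x ≤ T → ‖A x‖ ≤ M := by
    intro x hx
    rw [hA]
    refine le_trans (norm_sum_le _ _) ?_
    exact Finset.sum_le_sum_of_subset_of_nonneg
      (Finset.Icc_subset_Icc le_rfl (Nat.floor_le_floor hx))
      (fun _ _ _ => norm_nonneg _)
  have hsmall : ∀ᶠ σ in 𝓝[>] (0:ℝ), σ ^ (N + 1) < (c / 2) / (M * T + 1) := by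
    have htt : Tendsto (fun σ : ℝ => σ ^ (N + 1)) (𝓝[>] (0:ℝ)) (𝓝 0) := by
      have h0 : Tendsto (fun σ : ℝ => σ ^ (N + 1)) (𝓝 (0:ℝ)) (𝓝 0) := by
        simpa using (continuous_pow (N + 1)).tendsto (0:ℝ)
      exact h0.mono_left nhdsWithin_le_nhds
    exact htt.eventually (gt_mem_nhds (by positivity))
  filter_upwards [hsmall, self_mem_nhdsWithin] with σ hσsmall hσmem
  have hσ : 0 < σ := hσmem
  obtain ⟨K, hKdef⟩ : ∃ K : ℝ, K = ε * (2 * N / σ) ^ N := ⟨_, rfl⟩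
  have hK0 : 0 ≤ K := by rw [hKdef]; positivity
  have hpt : ∀ x : ℝ, x ∈ Ioi (1:ℝ) → ‖A x‖ / x ^ (1 + σ) ≤ (M + K) * x ^ (-(1 + σ / 2)) := by
    intro x hx
    have hx1 : (1:ℝ) < x := hx
    have hx0 : (0:ℝ) < x := by linarith
    have hxσ : (1:ℝ) ≤ x ^ (σ / 2) := Real.one_le_rpow hx1.le (by positivity)
    have hA_le : ‖A x‖ ≤ M + K * x ^ (σ / 2) := by
      rcases le_total x T with h | h
      · have := hMbound x h
        nlinarith
      · have h1 := hTbound x h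
        have h2 := logpow_le_aux N hN hσ hx1.le
        have h3 : ε * Real.log x ^ N ≤ K * x ^ (σ / 2) := by
          rw [hKdef, mul_assoc]
          exact mul_le_mul_of_nonneg_left h2 hεpos.le
        linarith
    have hrp : (0:ℝ) < x ^ (1 + σ) := Real.rpow_pos_of_pos hx0 _
    rw [div_le_iff₀ hrp]
    calc ‖A x‖ ≤ M + K * x ^ (σ / 2) := hA_le
      _ ≤ (M + K) * x ^ (σ / 2) := by nlinarith
      _ = (M + K) * x ^ (-(1 + σ / 2)) * x ^ (1 + σ) := by
          have hexp : -(1 + σ / 2) + (1 + σ) = σ / 2 := by ring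
          rw [mul_assoc, ← Real.rpow_add hx0, hexp]
  have hmeas : Measurable fun x : ℝ => ‖A x‖ / x ^ (1 + σ) :=
    measA.norm.div (Real.continuous_rpow_const (by positivity)).measurable
  have hintD : IntegrableOn (fun x : ℝ => (M + K) * x ^ (-(1 + σ / 2))) (Ioi 1) :=
    (integrableOn_Ioi_rpow_of_lt (by linarith) one_pos).const_mul _
  have hint : IntegrableOn (fun x : ℝ => ‖A x‖ / x ^ (1 + σ)) (Ioi 1) := by
    refine hintD.integrable.mono' hmeas.aestronglyMeasurable ?_
    filter_upwards [ae_restrict_mem measurableSet_Ioi] with x hx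
    rw [Real.norm_eq_abs, abs_of_nonneg]
    · exact hpt x hx
    · have hx0 : (0:ℝ) < x := lt_trans one_pos hx
      positivity
  have hsplit : ∫ x in Ioi (1:ℝ), ‖A x‖ / x ^ (1 + σ)
      = (∫ x in Ioc (1:ℝ) T, ‖A x‖ / x ^ (1 + σ)) + ∫ x in Ioi T, ‖A x‖ / x ^ (1 + σ) := by
    rw [← setIntegral_union (Ioc_disjoint_Ioi le_rfl) measurableSet_Ioi
      (hint.mono_set Ioc_subset_Ioi_self)
      (hint.mono_set (Ioi_subset_Ioi hT1)), Ioc_union_Ioi_eq_Ioi hT1]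
  have hhead : (∫ x in Ioc (1:ℝ) T, ‖A x‖ / x ^ (1 + σ)) ≤ M * T := by
    have h1 : (∫ x in Ioc (1:ℝ) T, ‖A x‖ / x ^ (1 + σ)) ≤ ∫ _x in Ioc (1:ℝ) T, M := by
      refine setIntegral_mono_on (hint.mono_set Ioc_subset_Ioi_self)
        (integrableOn_const measure_Ioc_lt_top.ne) measurableSet_Ioc ?_
      intro x hx
      have hx1 : (1:ℝ) < x := hx.1
      have hx0 : (0:ℝ) < x := by linarith
      have hd1 : (1:ℝ) ≤ x ^ (1 + σ) := Real.one_le_rpow hx1.le (by positivity)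
      calc ‖A x‖ / x ^ (1 + σ) ≤ ‖A x‖ := div_le_self (norm_nonneg _) hd1
        _ ≤ M := hMbound x hx.2
    rw [setIntegral_const, smul_eq_mul] at h1
    refine h1.trans ?_
    rw [Real.volume_real_Ioc_of_le hT1]
    nlinarith
  have htail : (∫ x in Ioi T, ‖A x‖ / x ^ (1 + σ)) ≤ K * (2 / σ) := by
    have hintK : IntegrableOn (fun x : ℝ => K * x ^ (-(1 + σ / 2))) (Ioi 1) :=
      (integrableOn_Ioi_rpow_of_lt (by linarith) one_pos).const_mul _
    have h1 : (∫ x in Ioi T, ‖A x‖ / x ^ (1 + σ)) ≤ ∫ x in Ioi T, K * x ^ (-(1 + σ / 2)) := by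
      refine setIntegral_mono_on (hint.mono_set (Ioi_subset_Ioi hT1))
        (hintK.mono_set (Ioi_subset_Ioi hT1)) measurableSet_Ioi ?_
      intro x hx
      have hxT : T < x := hx
      have hx1 : (1:ℝ) < x := lt_of_le_of_lt hT1 hxT
      have hx0 : (0:ℝ) < x := by linarith
      have hrp : (0:ℝ) < x ^ (1 + σ) := Real.rpow_pos_of_pos hx0 _
      rw [div_le_iff₀ hrp]
      calc ‖A x‖ ≤ ε * Real.log x ^ N := hTbound x hxT.le
        _ ≤ K * x ^ (σ / 2) := by
            rw [hKdef, mul_assoc]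
            exact mul_le_mul_of_nonneg_left (logpow_le_aux N hN hσ hx1.le) hεpos.le
        _ = K * x ^ (-(1 + σ / 2)) * x ^ (1 + σ) := by
            have hexp : -(1 + σ / 2) + (1 + σ) = σ / 2 := by ring
            rw [mul_assoc, ← Real.rpow_add hx0, hexp]
    have h2 : (∫ x in Ioi T, K * x ^ (-(1 + σ / 2))) ≤ ∫ x in Ioi (1:ℝ), K * x ^ (-(1 + σ / 2)) := by
      refine setIntegral_mono_set hintK ?_
        (HasSubset.Subset.eventuallyLE (Ioi_subset_Ioi hT1))
      filter_upwards [ae_restrict_mem measurableSet_Ioi] with x hx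
      have hx0 : (0:ℝ) < x := lt_trans one_pos hx
      positivity
    have h3 : (∫ x in Ioi (1:ℝ), K * x ^ (-(1 + σ / 2))) = K * (2 / σ) := by
      rw [MeasureTheory.integral_const_mul, integral_Ioi_rpow_of_lt (by linarith) one_pos,
        Real.one_rpow]
      congr 1
      field_simp
      rw [show -(2 + σ) + 2 = -σ by ring, div_neg, neg_neg, div_self hσ.ne']
    linarith
  have hKval : K * (2 / σ) = (c / 2) / σ ^ (N + 1) := by
    rw [hKdef, hεdef, div_pow, mul_pow]
    have hσN : (0:ℝ) < σ ^ N := by positivity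
    have h2N : ((2:ℝ)) ^ (N + 2) = 2 ^ N * 4 := by rw [pow_add]; norm_num
    rw [h2N, pow_succ]
    field_simp
    ring
  have hMT : M * T ≤ (c / 2) / σ ^ (N + 1) := by
    have hσp : (0:ℝ) < σ ^ (N + 1) := by positivity
    have hMT1 : (0:ℝ) < M * T + 1 := by nlinarith
    rw [le_div_iff₀ hσp]
    have h : σ ^ (N + 1) * (M * T + 1) < c / 2 := (lt_div_iff₀ hMT1).mp hσsmall
    nlinarith
  have hnn : 0 ≤ ∫ x in Ioi (1:ℝ), ‖A x‖ / x ^ (1 + σ) := by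
    refine setIntegral_nonneg measurableSet_Ioi fun x hx => ?_
    have hx0 : (0:ℝ) < x := lt_trans one_pos hx
    positivity
  have hσp : (0:ℝ) < σ ^ (N + 1) := by positivity
  rw [Real.norm_eq_abs, abs_of_nonneg hnn, Real.norm_eq_abs,
    abs_of_nonneg (by positivity : (0:ℝ) ≤ 1 / σ ^ (N + 1))]
  rw [hsplit]
  have hfin : c * (1 / σ ^ (N + 1)) = (c / 2) / σ ^ (N + 1) + (c / 2) / σ ^ (N + 1) := by
    field_simp; ring
  rw [hfin]
  exact add_le_add (hhead.trans hMT) (htail.trans (le_of_eq hKval))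
end

section
/- Let χ be a non-principal Dirichlet character modulo q, let S be a finite set of primes, and let f be the completely multiplicative function with f(p) = χ(p) for all primes p ∉ S and |f(p)| ≤ 1 for p ∈ S. Then ∑_{n ≤ x} f(n) = O((log x)^{|S|}) as x → ∞. -/
open Filter Asymptotics Finset


lemma char_sum_range_bound (q : ℕ) [NeZero q] (χ : DirichletCharacter ℂ q) (hχ : χ ≠ 1)
    (N : ℕ) : ‖∑ n ∈ Finset.range N, χ (n : ZMod q)‖ ≤ q := by
  induction N using Nat.strong_induction_on with
  | _ N ih =>
    rcases lt_or_ge N q with h | h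
    · calc ‖∑ n ∈ Finset.range N, χ (n : ZMod q)‖
          ≤ ∑ n ∈ Finset.range N, ‖χ (n : ZMod q)‖ := norm_sum_le _ _
        _ ≤ ∑ _n ∈ Finset.range N, 1 := by
            exact Finset.sum_le_sum fun i _ => DirichletCharacter.norm_le_one χ _
        _ = N := by simp
        _ ≤ q := by exact_mod_cast h.le
    · have hq : 0 < q := Nat.pos_of_ne_zero (NeZero.ne q)
      have key : ∑ n ∈ Finset.range N, χ (n : ZMod q)
          = ∑ n ∈ Finset.range (N - q), χ (n : ZMod q)
            + ∑ i ∈ Finset.range q, χ (((N - q) + i : ℕ) : ZMod q) := by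
        rw [← Finset.sum_range_add, Nat.sub_add_cancel h]
      have h2 : ∑ i ∈ Finset.range q, χ (((N - q) + i : ℕ) : ZMod q) = 0 := by
        have h3 : ∑ i ∈ Finset.range q, χ (((N - q) + i : ℕ) : ZMod q)
            = ∑ a : ZMod q, χ (((N - q : ℕ) : ZMod q) + a) := by
          refine Finset.sum_nbij' (fun i => (i : ZMod q)) (fun a => a.val) ?_ ?_ ?_ ?_ ?_
          · intro a _; exact Finset.mem_univ _
          · intro a _; exact Finset.mem_range.2 (ZMod.val_lt a)
          · intro a ha; exact ZMod.val_natCast_of_lt (Finset.mem_range.1 ha)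
          · intro a _; exact ZMod.natCast_zmod_val a
          · intro a _; push_cast; ring_nf
        rw [h3]
        rw [Fintype.sum_equiv (Equiv.addLeft (((N - q : ℕ) : ZMod q)))
          (fun a => χ (((N - q : ℕ) : ZMod q) + a)) (fun a => χ a) (fun a => rfl)]
        exact MulChar.sum_eq_zero_of_ne_one hχ
      rw [key, h2, add_zero]
      exact ih _ (by omega)


lemma f_list_prod (f : ℕ → ℂ) (hf1 : f 1 = 1)
    (hmul : ∀ m n : ℕ, m ≠ 0 → n ≠ 0 → f (m * n) = f m * f n) :
    ∀ l : List ℕ, (∀ r ∈ l, r ≠ 0) → f l.prod = (l.map f).prod := by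
  intro l
  induction l with
  | nil => intro _; simpa using hf1
  | cons r t ih =>
    intro hl
    have hr : r ≠ 0 := hl r (List.mem_cons_self)
    have ht : ∀ s ∈ t, s ≠ 0 := fun s hs => hl s (List.mem_cons_of_mem _ hs)
    have htp : t.prod ≠ 0 := by
      have : 0 < t.prod := List.prod_pos fun s hs => Nat.pos_of_ne_zero (ht s hs)
      omega
    rw [List.prod_cons, hmul r t.prod hr htp, List.map_cons, List.prod_cons, ih ht]

lemma norm_f_le_one (q : ℕ) [NeZero q] (χ : DirichletCharacter ℂ q)
    (S : Finset ℕ) (f : ℕ → ℂ) (hf1 : f 1 = 1)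
    (hmul : ∀ m n : ℕ, m ≠ 0 → n ≠ 0 → f (m * n) = f m * f n)
    (hin : ∀ p ∈ S, ‖f p‖ ≤ 1)
    (hout : ∀ p : ℕ, p.Prime → p ∉ S → f p = χ (p : ZMod q)) :
    ∀ n : ℕ, n ≠ 0 → ‖f n‖ ≤ 1 := by
  have hprime : ∀ r : ℕ, r.Prime → ‖f r‖ ≤ 1 := by
    intro r hr
    by_cases h : r ∈ S
    · exact hin r h
    · rw [hout r hr h]; exact DirichletCharacter.norm_le_one χ _
  have key : ∀ l : List ℕ, (∀ r ∈ l, r.Prime) → ‖f l.prod‖ ≤ 1 := by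
    intro l
    induction l with
    | nil => intro _; simp [hf1]
    | cons r t ih =>
      intro hl
      have hr : r.Prime := hl r (List.mem_cons_self)
      have ht : ∀ s ∈ t, s.Prime := fun s hs => hl s (List.mem_cons_of_mem _ hs)
      have htp : t.prod ≠ 0 := by
        have : 0 < t.prod := List.prod_pos fun s hs => (ht s hs).pos
        omega
      rw [List.prod_cons, hmul r t.prod hr.ne_zero htp, norm_mul]
      exact mul_le_one₀ (hprime r hr) (norm_nonneg _) (ih ht)
  intro n hn
  rw [← Nat.prod_primeFactorsList hn]
  exact key _ (fun r hr => Nat.prime_of_mem_primeFactorsList hr)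


lemma f_eq_char (q : ℕ) [NeZero q] (χ : DirichletCharacter ℂ q)
    (f : ℕ → ℂ) (hf1 : f 1 = 1)
    (hmul : ∀ m n : ℕ, m ≠ 0 → n ≠ 0 → f (m * n) = f m * f n)
    (hout : ∀ p : ℕ, p.Prime → f p = χ (p : ZMod q)) :
    ∀ n : ℕ, n ≠ 0 → f n = χ (n : ZMod q) := by
  have key : ∀ l : List ℕ, (∀ r ∈ l, r.Prime) → f l.prod = χ ((l.prod : ℕ) : ZMod q) := by
    intro l
    induction l with
    | nil => intro _; simpa using hf1
    | cons r t ih =>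
      intro hl
      have hr : r.Prime := hl r (List.mem_cons_self)
      have ht : ∀ s ∈ t, s.Prime := fun s hs => hl s (List.mem_cons_of_mem _ hs)
      have htp : t.prod ≠ 0 := by
        have : 0 < t.prod := List.prod_pos fun s hs => (ht s hs).pos
        omega
      rw [List.prod_cons, hmul r t.prod hr.ne_zero htp, ih ht, hout r hr]
      rw [← map_mul]
      push_cast
      ring_nf
  intro n hn
  conv_lhs => rw [← Nat.prod_primeFactorsList hn]
  rw [key _ (fun r hr => Nat.prime_of_mem_primeFactorsList hr), Nat.prod_primeFactorsList hn]



lemma base_case (q : ℕ) [NeZero q] (χ : DirichletCharacter ℂ q) (hχ : χ ≠ 1)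
    (f : ℕ → ℂ) (hf1 : f 1 = 1)
    (hmul : ∀ m n : ℕ, m ≠ 0 → n ≠ 0 → f (m * n) = f m * f n)
    (hout : ∀ p : ℕ, p.Prime → f p = χ (p : ZMod q)) :
    (fun x : ℝ => ∑ n ∈ Finset.Icc 1 ⌊x⌋₊, f n) =O[atTop]
      fun x : ℝ => (Real.log x) ^ (0 : ℕ) := by
  have key : ∀ N : ℕ, ‖∑ n ∈ Finset.Icc 1 N, f n‖ ≤ q + 1 := by
    intro N
    have h1 : ∑ n ∈ Finset.Icc 1 N, f n = ∑ n ∈ Finset.Icc 1 N, χ (n : ZMod q) := by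
      refine Finset.sum_congr rfl fun n hn => ?_
      have : 1 ≤ n := (Finset.mem_Icc.1 hn).1
      exact f_eq_char q χ f hf1 hmul hout n (by omega)
    have h2 : Finset.range (N + 1) = insert 0 (Finset.Icc 1 N) := by
      ext m
      simp only [Finset.mem_range, Finset.mem_insert, Finset.mem_Icc]
      omega
    have h3 : ∑ n ∈ Finset.range (N + 1), χ (n : ZMod q)
        = χ 0 + ∑ n ∈ Finset.Icc 1 N, χ (n : ZMod q) := by
      rw [h2, Finset.sum_insert (by simp)]
      norm_num
    have h4 : ∑ n ∈ Finset.Icc 1 N, χ (n : ZMod q)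
        = ∑ n ∈ Finset.range (N + 1), χ (n : ZMod q) - χ 0 := by
      rw [h3]; ring
    rw [h1, h4]
    calc ‖∑ n ∈ Finset.range (N + 1), χ (n : ZMod q) - χ 0‖
        ≤ ‖∑ n ∈ Finset.range (N + 1), χ (n : ZMod q)‖ + ‖χ 0‖ := norm_sub_le _ _
      _ ≤ q + 1 := by
          gcongr
          · exact char_sum_range_bound q χ hχ _
          · exact DirichletCharacter.norm_le_one χ _
  refine IsBigO.of_bound (q + 1) (Eventually.of_forall fun x => ?_)
  simp only [pow_zero, norm_one, mul_one]
  exact key _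



lemma step_case (q : ℕ) [NeZero q] (χ : DirichletCharacter ℂ q) (hχ : χ ≠ 1)
    (p : ℕ) (hp : p.Prime) (S' : Finset ℕ) (hpS' : p ∉ S') (hS' : ∀ r ∈ S', r.Prime)
    (ih : ∀ f : ℕ → ℂ, f 1 = 1 → (∀ m n : ℕ, m ≠ 0 → n ≠ 0 → f (m * n) = f m * f n) →
      (∀ r ∈ S', ‖f r‖ ≤ 1) → (∀ r : ℕ, r.Prime → r ∉ S' → f r = χ (r : ZMod q)) →
      (fun x : ℝ => ∑ n ∈ Finset.Icc 1 ⌊x⌋₊, f n) =O[atTop]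
        fun x : ℝ => (Real.log x) ^ S'.card)
    (f : ℕ → ℂ) (hf1 : f 1 = 1)
    (hmul : ∀ m n : ℕ, m ≠ 0 → n ≠ 0 → f (m * n) = f m * f n)
    (hin : ∀ r ∈ insert p S', ‖f r‖ ≤ 1)
    (hout : ∀ r : ℕ, r.Prime → r ∉ insert p S' → f r = χ (r : ZMod q)) :
    (fun x : ℝ => ∑ n ∈ Finset.Icc 1 ⌊x⌋₊, f n) =O[atTop]
      fun x : ℝ => (Real.log x) ^ (insert p S').card := by
  haveI : Fact p.Prime := ⟨hp⟩
  have hp0 : p ≠ 0 := hp.ne_zero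
  have hp1 : 1 < p := hp.one_lt
  set s' := S'.card with hs'
  set g : ℕ → ℂ := fun n =>
    if n = 0 then 0 else (χ (p : ZMod q)) ^ (padicValNat p n) * f (n / p ^ padicValNat p n)
    with hgdef
  have hgval : ∀ n : ℕ, n ≠ 0 →
      g n = (χ (p : ZMod q)) ^ (padicValNat p n) * f (n / p ^ padicValNat p n) := by
    intro n hn; simp [hgdef, hn]
  have hg1 : g 1 = 1 := by simp [hgdef, hf1]
  have hgf : ∀ n : ℕ, n ≠ 0 → ¬ p ∣ n → g n = f n := by
    intro n hn hnd
    rw [hgval n hn, padicValNat.eq_zero_of_not_dvd hnd]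
    simp
  have hgmul : ∀ m n : ℕ, m ≠ 0 → n ≠ 0 → g (m * n) = g m * g n := by
    intro m n hm hn
    obtain ⟨m', hm'⟩ := pow_padicValNat_dvd (p := p) (n := m)
    obtain ⟨n', hn'⟩ := pow_padicValNat_dvd (p := p) (n := n)
    have hm'0 : m' ≠ 0 := by rintro rfl; simp at hm'; exact hm hm'
    have hn'0 : n' ≠ 0 := by rintro rfl; simp at hn'; exact hn hn'
    have hppow : ∀ k : ℕ, 0 < p ^ k := fun k => pow_pos hp.pos k
    have hdm : m / p ^ padicValNat p m = m' :=
      Nat.div_eq_of_eq_mul_left (hppow _) (hm'.trans (Nat.mul_comm _ _))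
    have hdn : n / p ^ padicValNat p n = n' :=
      Nat.div_eq_of_eq_mul_left (hppow _) (hn'.trans (Nat.mul_comm _ _))
    have hv : padicValNat p (m * n) = padicValNat p m + padicValNat p n :=
      padicValNat.mul hm hn
    have hdmn : m * n / p ^ (padicValNat p m + padicValNat p n) = m' * n' := by
      refine Nat.div_eq_of_eq_mul_left (hppow _) ?_
      rw [pow_add]
      calc m * n = (p ^ padicValNat p m * m') * (p ^ padicValNat p n * n') := by rw [← hm', ← hn']
        _ = m' * n' * (p ^ padicValNat p m * p ^ padicValNat p n) := by ring
    rw [hgval _ (Nat.mul_ne_zero hm hn), hgval _ hm, hgval _ hn, hv, hdmn, hdm, hdn,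
      hmul m' n' hm'0 hn'0, pow_add]
    ring
  have hgp : g p = χ (p : ZMod q) := by
    rw [hgval p hp0, padicValNat_self]
    simp [Nat.div_self hp.pos, hf1]
  have hgprime : ∀ r : ℕ, r.Prime → r ≠ p → g r = f r := by
    intro r hr hrp
    refine hgf r hr.ne_zero fun hdvd => hrp ?_
    exact ((Nat.prime_dvd_prime_iff_eq hp hr).1 hdvd).symm
  have hfnorm := norm_f_le_one q χ (insert p S') f hf1 hmul hin hout
  have hgnorm : ∀ n : ℕ, n ≠ 0 → ‖g n‖ ≤ 1 := by
    intro n hn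
    rw [hgval n hn, norm_mul, norm_pow]
    have h1 : ‖χ (p : ZMod q)‖ ≤ 1 := DirichletCharacter.norm_le_one χ _
    have h2 : n / p ^ padicValNat p n ≠ 0 := by
      have := Nat.div_pos (Nat.le_of_dvd (Nat.pos_of_ne_zero hn) pow_padicValNat_dvd)
        (pow_pos hp.pos _)
      omega
    exact mul_le_one₀ (pow_le_one₀ (norm_nonneg _) h1) (norm_nonneg _) (hfnorm _ h2)
  have hfpow : ∀ k : ℕ, f (p ^ k) = f p ^ k := by
    intro k
    induction k with
    | zero => simpa using hf1
    | succ k ihk =>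
      rw [pow_succ, hmul _ _ (pow_ne_zero _ hp0) hp0, ihk, pow_succ]
  -- bound on partial sums of g
  have ihg := ih g hg1 hgmul
    (fun r hr => by
      rw [hgprime r (hS' r hr) (fun h => hpS' (h ▸ hr))]
      exact hin r (Finset.mem_insert_of_mem hr))
    (fun r hr hrS' => by
      by_cases hrp : r = p
      · rw [hrp, hgp]
      · rw [hgprime r hr hrp]
        exact hout r hr (by simp [hrp, hrS']))
  rw [isBigO_iff] at ihg
  obtain ⟨c, hc⟩ := ihg
  rw [eventually_atTop] at hc
  obtain ⟨x₀, hx₀⟩ := hc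
  set C : ℝ := max c 0 + max x₀ 0 + 1 with hCdef
  have hC0 : 0 < C := by
    have := le_max_right c 0; have := le_max_right x₀ 0; positivity
  have hCc : c ≤ C := by
    have := le_max_left c 0; have := le_max_right x₀ 0
    have h0 : (0:ℝ) ≤ max x₀ 0 := le_max_right x₀ 0
    simp only [hCdef]; linarith [le_max_left c 0]
  have hCx : x₀ ≤ C := by
    simp only [hCdef]; linarith [le_max_left x₀ 0, le_max_right c 0]
  have hlognat : ∀ M : ℕ, 0 ≤ Real.log M := by
    intro M
    rcases Nat.eq_zero_or_pos M with h | h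
    · simp [h]
    · exact Real.log_nonneg (by exact_mod_cast h)
  have hGbound : ∀ M : ℕ, ‖∑ n ∈ Finset.Icc 1 M, g n‖ ≤ C * ((Real.log M) ^ s' + 1) := by
    intro M
    have ht0 : 0 ≤ (Real.log M) ^ s' := pow_nonneg (hlognat M) _
    by_cases hM : x₀ ≤ (M : ℝ)
    · have h1 := hx₀ (M : ℝ) hM
      rw [Nat.floor_natCast] at h1
      have h2 : ‖(Real.log M) ^ s'‖ = (Real.log M) ^ s' := by
        rw [Real.norm_eq_abs, abs_of_nonneg ht0]
      rw [h2] at h1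
      calc ‖∑ n ∈ Finset.Icc 1 M, g n‖ ≤ c * (Real.log M) ^ s' := h1
        _ ≤ C * (Real.log M) ^ s' := mul_le_mul_of_nonneg_right hCc ht0
        _ ≤ C * ((Real.log M) ^ s' + 1) := by nlinarith
    · push_neg at hM
      have hMC : (M : ℝ) ≤ C := le_trans hM.le hCx
      calc ‖∑ n ∈ Finset.Icc 1 M, g n‖ ≤ ∑ n ∈ Finset.Icc 1 M, ‖g n‖ := norm_sum_le _ _
        _ ≤ ∑ n ∈ Finset.Icc 1 M, 1 := Finset.sum_le_sum fun n hn =>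
            hgnorm n (by have := (Finset.mem_Icc.1 hn).1; omega)
        _ = (M : ℝ) := by simp
        _ ≤ C := hMC
        _ ≤ C * ((Real.log M) ^ s' + 1) := by nlinarith
  -- key identity
  have hkey : ∀ N : ℕ, ∑ n ∈ Finset.Icc 1 N, f n
      = ∑ k ∈ Finset.range (N + 1), f p ^ k *
        ((∑ m ∈ Finset.Icc 1 (N / p ^ k), g m)
          - χ (p : ZMod q) * ∑ m ∈ Finset.Icc 1 (N / p ^ k / p), g m) := by
    intro N
    have hnotdvd : ∀ (k n : ℕ), n ≠ 0 → padicValNat p n = k → ¬ p ∣ n / p ^ k := by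
      intro k n hn0 hν hpd
      have hdvd : p ^ k ∣ n := hν ▸ pow_padicValNat_dvd
      have h1 : p ^ k * p ∣ n := (Nat.dvd_div_iff_mul_dvd hdvd).1 hpd
      have h2 : ¬ p ^ (padicValNat p n + 1) ∣ n := pow_succ_padicValNat_not_dvd hn0
      rw [hν] at h2
      exact h2 (by rwa [pow_succ])
    have hfib : ∑ n ∈ Finset.Icc 1 N, f n
        = ∑ k ∈ Finset.range (N + 1),
            ∑ n ∈ (Finset.Icc 1 N).filter (fun n => padicValNat p n = k), f n := by
      refine (Finset.sum_fiberwise_of_maps_to ?_ f).symm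
      intro n hn
      have hn' := Finset.mem_Icc.1 hn
      refine Finset.mem_range.2 ?_
      have h1 := padicValNat_le_nat_log (p := p) n
      have h2 := Nat.log_le_self p n
      omega
    rw [hfib]
    refine Finset.sum_congr rfl fun k _ => ?_
    have step3 : ∀ M : ℕ, ∑ m ∈ (Finset.Icc 1 M).filter (fun m => ¬ p ∣ m), g m
        = (∑ m ∈ Finset.Icc 1 M, g m)
          - χ (p : ZMod q) * ∑ m ∈ Finset.Icc 1 (M / p), g m := by
      intro M
      have hsplit := Finset.sum_filter_add_sum_filter_not (Finset.Icc 1 M) (fun m => p ∣ m) g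
      have hdvdsum : ∑ m ∈ (Finset.Icc 1 M).filter (fun m => p ∣ m), g m
          = χ (p : ZMod q) * ∑ j ∈ Finset.Icc 1 (M / p), g j := by
        rw [Finset.mul_sum]
        refine Finset.sum_nbij' (fun m => m / p) (fun j => p * j) ?_ ?_ ?_ ?_ ?_
        · intro m hm
          obtain ⟨hm1, hm2⟩ := Finset.mem_filter.1 hm
          obtain ⟨hm3, hm4⟩ := Finset.mem_Icc.1 hm1
          refine Finset.mem_Icc.2 ⟨?_, Nat.div_le_div_right hm4⟩
          exact (Nat.one_le_div_iff hp.pos).2 (Nat.le_of_dvd (by omega) hm2)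
        · intro j hj
          obtain ⟨hj1, hj2⟩ := Finset.mem_Icc.1 hj
          refine Finset.mem_filter.2 ⟨Finset.mem_Icc.2 ⟨?_, ?_⟩, Dvd.intro _ rfl⟩
          · exact Nat.one_le_iff_ne_zero.2 (Nat.mul_ne_zero hp0 (by omega))
          · have := (Nat.le_div_iff_mul_le hp.pos).1 hj2
            simpa [mul_comm] using this
        · intro m hm
          obtain ⟨hm1, hm2⟩ := Finset.mem_filter.1 hm
          exact Nat.mul_div_cancel' hm2
        · intro j hj
          exact Nat.mul_div_cancel_left _ hp.pos
        · intro m hm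
          obtain ⟨hm1, hm2⟩ := Finset.mem_filter.1 hm
          obtain ⟨hm3, hm4⟩ := Finset.mem_Icc.1 hm1
          have hq0 : m / p ≠ 0 := by
            have := Nat.le_of_dvd (by omega) hm2
            have := Nat.one_le_div_iff hp.pos |>.2 this
            omega
          conv_lhs => rw [← Nat.mul_div_cancel' hm2]
          rw [hgmul p (m / p) hp0 hq0, hgp]
      rw [hdvdsum] at hsplit
      linear_combination hsplit
    have hstep2 : ∑ n ∈ (Finset.Icc 1 N).filter (fun n => padicValNat p n = k), f n
        = ∑ m ∈ (Finset.Icc 1 (N / p ^ k)).filter (fun m => ¬ p ∣ m), f p ^ k * g m := by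
      refine Finset.sum_nbij' (fun n => n / p ^ k) (fun m => p ^ k * m) ?_ ?_ ?_ ?_ ?_
      · intro n hn
        obtain ⟨hn1, hν⟩ := Finset.mem_filter.1 hn
        obtain ⟨hn2, hn3⟩ := Finset.mem_Icc.1 hn1
        have hdvd : p ^ k ∣ n := hν ▸ pow_padicValNat_dvd
        refine Finset.mem_filter.2 ⟨Finset.mem_Icc.2
          ⟨(Nat.one_le_div_iff (pow_pos hp.pos k)).2 (Nat.le_of_dvd (by omega) hdvd),
            Nat.div_le_div_right hn3⟩, hnotdvd k n (by omega) hν⟩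
      · intro m hm
        obtain ⟨hm1, hpd⟩ := Finset.mem_filter.1 hm
        obtain ⟨hm2, hm3⟩ := Finset.mem_Icc.1 hm1
        have hm0 : m ≠ 0 := by omega
        refine Finset.mem_filter.2 ⟨Finset.mem_Icc.2 ⟨?_, ?_⟩, ?_⟩
        · exact Nat.one_le_iff_ne_zero.2 (Nat.mul_ne_zero (pow_ne_zero _ hp0) hm0)
        · have := (Nat.le_div_iff_mul_le (pow_pos hp.pos k)).1 hm3
          simpa [mul_comm] using this
        · rw [padicValNat.mul (pow_ne_zero _ hp0) hm0, padicValNat.prime_pow,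
            padicValNat.eq_zero_of_not_dvd hpd]
          omega
      · intro n hn
        obtain ⟨hn1, hν⟩ := Finset.mem_filter.1 hn
        exact Nat.mul_div_cancel' (hν ▸ pow_padicValNat_dvd)
      · intro m hm
        exact Nat.mul_div_cancel_left _ (pow_pos hp.pos k)
      · intro n hn
        obtain ⟨hn1, hν⟩ := Finset.mem_filter.1 hn
        obtain ⟨hn2, hn3⟩ := Finset.mem_Icc.1 hn1
        have hdvd : p ^ k ∣ n := hν ▸ pow_padicValNat_dvd
        have hq0 : n / p ^ k ≠ 0 := by
          have h1 := Nat.le_of_dvd (by omega) hdvd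
          have := Nat.one_le_div_iff (pow_pos hp.pos k) |>.2 h1
          omega
        conv_lhs => rw [← Nat.mul_div_cancel' hdvd]
        rw [hmul _ _ (pow_ne_zero _ hp0) hq0, hfpow, hgf _ hq0 (hnotdvd k n (by omega) hν)]
    rw [hstep2, ← Finset.mul_sum, step3]
  -- final estimate
  rw [Finset.card_insert_of_notMem hpS']
  refine IsBigO.of_bound (12 * C) ?_
  filter_upwards [eventually_ge_atTop (3 : ℝ)] with x hx3
  have hxpos : (0:ℝ) < x := by linarith
  set N : ℕ := ⌊x⌋₊ with hNdef
  have hN3 : 3 ≤ N := Nat.le_floor (by exact_mod_cast hx3)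
  have hN0 : N ≠ 0 := by omega
  have hNlex : (N : ℝ) ≤ x := Nat.floor_le hxpos.le
  have hlogx1 : 1 ≤ Real.log x := by
    rw [Real.le_log_iff_exp_le hxpos]
    have := Real.exp_one_lt_d9
    linarith
  have hlogxpow1 : 1 ≤ (Real.log x) ^ s' := one_le_pow₀ hlogx1
  have hloglex : ∀ M : ℕ, M ≤ N → (Real.log M) ^ s' ≤ (Real.log x) ^ s' := by
    intro M hM
    refine pow_le_pow_left₀ (hlognat M) ?_ _
    rcases Nat.eq_zero_or_pos M with h | h
    · rw [h]; simp; linarith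
    · refine Real.log_le_log (by exact_mod_cast h) ?_
      exact le_trans (by exact_mod_cast hM) hNlex
  set K : ℕ := Nat.log p N with hKdef
  have htrunc : ∑ k ∈ Finset.range (N + 1), f p ^ k *
        ((∑ m ∈ Finset.Icc 1 (N / p ^ k), g m)
          - χ (p : ZMod q) * ∑ m ∈ Finset.Icc 1 (N / p ^ k / p), g m)
      = ∑ k ∈ Finset.range (K + 1), f p ^ k *
        ((∑ m ∈ Finset.Icc 1 (N / p ^ k), g m)
          - χ (p : ZMod q) * ∑ m ∈ Finset.Icc 1 (N / p ^ k / p), g m) := by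
    refine (Finset.sum_subset (Finset.range_subset_range.2
      (by have := Nat.log_le_self p N; omega)) ?_).symm
    intro k hk1 hk2
    have hklt : K < k := by
      simp only [Finset.mem_range] at hk1 hk2; omega
    have hNz : N / p ^ k = 0 := Nat.div_eq_of_lt (Nat.lt_pow_of_log_lt hp1 hklt)
    rw [hNz]
    norm_num
  have hterm : ∀ k : ℕ, ‖f p ^ k *
        ((∑ m ∈ Finset.Icc 1 (N / p ^ k), g m)
          - χ (p : ZMod q) * ∑ m ∈ Finset.Icc 1 (N / p ^ k / p), g m)‖
      ≤ 4 * C * (Real.log x) ^ s' := by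
    intro k
    have hfp : ‖f p‖ ≤ 1 := hin p (Finset.mem_insert_self p S')
    have hA := hGbound (N / p ^ k)
    have hB := hGbound (N / p ^ k / p)
    have htA := hloglex (N / p ^ k) (Nat.div_le_self _ _)
    have htB := hloglex (N / p ^ k / p) (le_trans (Nat.div_le_self _ _) (Nat.div_le_self _ _))
    have hchi : ‖χ ((p : ℕ) : ZMod q)‖ ≤ 1 := DirichletCharacter.norm_le_one χ _
    have h1 : ‖f p ^ k *
        ((∑ m ∈ Finset.Icc 1 (N / p ^ k), g m)
          - χ (p : ZMod q) * ∑ m ∈ Finset.Icc 1 (N / p ^ k / p), g m)‖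
        ≤ ‖∑ m ∈ Finset.Icc 1 (N / p ^ k), g m‖
          + ‖∑ m ∈ Finset.Icc 1 (N / p ^ k / p), g m‖ := by
      rw [norm_mul, norm_pow]
      have h2 : ‖f p‖ ^ k ≤ 1 := pow_le_one₀ (norm_nonneg _) hfp
      have h3 : ‖(∑ m ∈ Finset.Icc 1 (N / p ^ k), g m)
          - χ (p : ZMod q) * ∑ m ∈ Finset.Icc 1 (N / p ^ k / p), g m‖
          ≤ ‖∑ m ∈ Finset.Icc 1 (N / p ^ k), g m‖
            + ‖∑ m ∈ Finset.Icc 1 (N / p ^ k / p), g m‖ := by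
        refine le_trans (norm_sub_le _ _) ?_
        gcongr
        rw [norm_mul]
        nlinarith [norm_nonneg (∑ m ∈ Finset.Icc 1 (N / p ^ k / p), g m)]
      nlinarith [norm_nonneg ((∑ m ∈ Finset.Icc 1 (N / p ^ k), g m)
          - χ (p : ZMod q) * ∑ m ∈ Finset.Icc 1 (N / p ^ k / p), g m),
        pow_nonneg (norm_nonneg (f p)) k]
    refine le_trans h1 ?_
    have := hlognat (N / p ^ k)
    have := hlognat (N / p ^ k / p)
    nlinarith [pow_nonneg (hlognat (N / p ^ k)) s', pow_nonneg (hlognat (N / p ^ k / p)) s']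
  have hK3 : (K : ℝ) + 1 ≤ 3 * Real.log x := by
    have hpK : (p:ℝ)^K ≤ (N:ℝ) := by exact_mod_cast Nat.pow_log_le_self p hN0
    have h1 : (K:ℝ) * Real.log p ≤ Real.log x := by
      calc (K:ℝ) * Real.log p = Real.log ((p:ℝ)^K) := by rw [Real.log_pow]
        _ ≤ Real.log x := Real.log_le_log (by positivity) (hpK.trans hNlex)
    have hlogp : Real.log 2 ≤ Real.log (p:ℝ) :=
      Real.log_le_log (by norm_num) (by exact_mod_cast hp.two_le)
    have hlog2 : (1:ℝ)/2 < Real.log 2 := by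
      have := Real.log_two_gt_d9; linarith
    have hK0 : (0:ℝ) ≤ (K:ℝ) := Nat.cast_nonneg K
    nlinarith
  calc ‖∑ n ∈ Finset.Icc 1 N, f n‖
      = ‖∑ k ∈ Finset.range (K + 1), f p ^ k *
        ((∑ m ∈ Finset.Icc 1 (N / p ^ k), g m)
          - χ (p : ZMod q) * ∑ m ∈ Finset.Icc 1 (N / p ^ k / p), g m)‖ := by
        rw [hkey N, htrunc]
    _ ≤ ∑ k ∈ Finset.range (K + 1), ‖f p ^ k *
        ((∑ m ∈ Finset.Icc 1 (N / p ^ k), g m)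
          - χ (p : ZMod q) * ∑ m ∈ Finset.Icc 1 (N / p ^ k / p), g m)‖ := norm_sum_le _ _
    _ ≤ ∑ _k ∈ Finset.range (K + 1), 4 * C * (Real.log x) ^ s' :=
        Finset.sum_le_sum fun k _ => hterm k
    _ = ((K:ℝ) + 1) * (4 * C * (Real.log x) ^ s') := by
        rw [Finset.sum_const, Finset.card_range, nsmul_eq_mul]
        push_cast
        ring
    _ ≤ (3 * Real.log x) * (4 * C * (Real.log x) ^ s') := by
        refine mul_le_mul_of_nonneg_right hK3 ?_
        positivity
    _ = 12 * C * (Real.log x ^ (s' + 1)) := by rw [pow_succ]; ring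
    _ ≤ 12 * C * ‖Real.log x ^ (s' + 1)‖ := by
        refine mul_le_mul_of_nonneg_left (le_abs_self _) ?_
        positivity

lemma aux_main (q : ℕ) [NeZero q] (χ : DirichletCharacter ℂ q) (hχ : χ ≠ 1) :
    ∀ S : Finset ℕ, (∀ p ∈ S, p.Prime) →
    ∀ f : ℕ → ℂ, f 1 = 1 → (∀ m n : ℕ, m ≠ 0 → n ≠ 0 → f (m * n) = f m * f n) →
    (∀ p ∈ S, ‖f p‖ ≤ 1) → (∀ p : ℕ, p.Prime → p ∉ S → f p = χ (p : ZMod q)) →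
    (fun x : ℝ => ∑ n ∈ Finset.Icc 1 ⌊x⌋₊, f n) =O[atTop]
      fun x : ℝ => (Real.log x) ^ S.card := by
  intro S
  induction S using Finset.induction_on with
  | empty =>
    intro _ f hf1 hmul _ hout
    simpa using base_case q χ hχ f hf1 hmul (fun p hp => hout p hp (by simp))
  | @insert p S' hpS' ih =>
    intro hS f hf1 hmul hin hout
    exact step_case q χ hχ p (hS p (Finset.mem_insert_self _ _)) S' hpS'
      (fun r hr => hS r (Finset.mem_insert_of_mem hr))
      (fun f hf1 hmul hin hout =>
        ih (fun r hr => hS r (Finset.mem_insert_of_mem hr)) f hf1 hmul hin hout)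
      f hf1 hmul hin hout

theorem stmt5 (q : ℕ) [NeZero q] (χ : DirichletCharacter ℂ q) (hχ : χ ≠ 1)
    (S : Finset ℕ) (hS : ∀ p ∈ S, p.Prime)
    (f : ℕ → ℂ) (hf1 : f 1 = 1) (hmul : ∀ m n : ℕ, f (m * n) = f m * f n)
    (hin : ∀ p ∈ S, ‖f p‖ ≤ 1)
    (hout : ∀ p : ℕ, p.Prime → p ∉ S → f p = χ (p : ZMod q)) :
    (fun x : ℝ => ∑ n ∈ Finset.Icc 1 ⌊x⌋₊, f n) =O[atTop]
      fun x : ℝ => (Real.log x) ^ S.card := by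
  exact aux_main q χ hχ S hS f hf1 (fun m n _ _ => hmul m n) hin hout
end

section
/- Let α be irrational and suppose there are constants μ ≥ 1, C > 0, B₀ ≥ 1 such that |α - a/b| ≥ C/b^{μ+1} for all integers a and all integers b ≥ B₀. Then for every integer k ≥ μ + 2, the series ∑_{n=1}^∞ n^{-k} |1 - e^{2πi n α}|^{-1} converges. -/
set_option maxHeartbeats 1000000

open Real

lemma norm_one_sub_exp (θ : ℝ) :
    ‖(1 : ℂ) - Complex.exp (θ * Complex.I)‖ = 2 * |Real.sin (θ / 2)| := by
  rw [Complex.exp_mul_I]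
  have h0 : (1 : ℂ) - (Complex.cos θ + Complex.sin θ * Complex.I)
      = Complex.ofReal (1 - Real.cos θ) + Complex.ofReal (-Real.sin θ) * Complex.I := by
    push_cast; ring
  rw [h0]
  rw [show ‖Complex.ofReal (1 - Real.cos θ) + Complex.ofReal (-Real.sin θ) * Complex.I‖
      = Real.sqrt ((1 - Real.cos θ)^2 + (-Real.sin θ)^2) by
    rw [Complex.norm_def, Complex.normSq_add_mul_I]]
  have h1 : (1 - Real.cos θ)^2 + (-Real.sin θ)^2 = (2 * |Real.sin (θ / 2)|)^2 := by
    have hs := Real.cos_sq (θ/2)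
    rw [show 2 * (θ/2) = θ by ring] at hs
    have hp := Real.sin_sq_add_cos_sq (θ/2)
    have hsc := Real.sin_sq_add_cos_sq θ
    have habs : |Real.sin (θ/2)|^2 = Real.sin (θ/2)^2 := sq_abs _
    nlinarith
  rw [h1, Real.sqrt_sq (by positivity)]

lemma abs_sin_pi_mul (x : ℝ) (m : ℤ) : |Real.sin (π * (x + m))| = |Real.sin (π * x)| := by
  have h0 : π * (x + m) = π * x + m * π := by ring
  rw [h0, Real.sin_add, Real.sin_int_mul_pi, mul_zero, add_zero, abs_mul,
    Real.abs_cos_int_mul_pi, mul_one]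

theorem stmt13 (α : ℝ) (hα : Irrational α) (μ C : ℝ) (hμ : 1 ≤ μ) (hC : 0 < C)
    (B₀ : ℕ) (hB₀ : 1 ≤ B₀)
    (h : ∀ a : ℤ, ∀ b : ℕ, B₀ ≤ b → C / (b : ℝ) ^ (μ + 1) ≤ |α - (a : ℝ) / b|)
    (k : ℕ) (hk : μ + 2 ≤ (k : ℝ)) :
    Summable (fun n : ℕ =>
      1 / ((n : ℝ) ^ k * ‖(1 : ℂ) - Complex.exp (2 * Real.pi * Complex.I * n * α)‖)) := by
  rw [← summable_nat_add_iff B₀]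
  -- key lower bound on the norm for n ≥ B₀
  have key : ∀ n : ℕ, B₀ ≤ n →
      4 * C / (n : ℝ) ^ μ ≤ ‖(1 : ℂ) - Complex.exp (2 * Real.pi * Complex.I * n * α)‖ := by
    intro n hn
    have hn1 : (1 : ℝ) ≤ (n : ℝ) := by exact_mod_cast hB₀.trans hn
    have hnpos : (0 : ℝ) < n := by linarith
    have harg : (2 * (Real.pi : ℂ) * Complex.I * n * α)
        = Complex.ofReal (2 * π * n * α) * Complex.I := by
      push_cast; ring
    rw [harg, norm_one_sub_exp]
    have hhalf : (2 * π * (n : ℝ) * α) / 2 = π * ((n : ℝ) * α) := by ring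
    rw [hhalf]
    set m : ℤ := round ((n : ℝ) * α) with hm
    set x : ℝ := (n : ℝ) * α - m with hx
    have hxle : |x| ≤ 1 / 2 := by rw [hx]; exact abs_sub_round _
    have hsin : |Real.sin (π * ((n : ℝ) * α))| = |Real.sin (π * x)| := by
      have h2 : (n : ℝ) * α = x + m := by rw [hx]; ring
      rw [h2, abs_sin_pi_mul]
    rw [hsin]
    -- lower bound on |x|
    have hxlb : C / (n : ℝ) ^ μ ≤ |x| := by
      have hb := h m n hn
      have hμ1 : (n : ℝ) ^ (μ + 1) = (n : ℝ) ^ μ * n := by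
        rw [Real.rpow_add hnpos, Real.rpow_one]
      have h3 : |α - (m : ℝ) / n| = |x| / n := by
        rw [show α - (m : ℝ) / n = ((n : ℝ) * α - m) / n by field_simp, abs_div,
          abs_of_pos hnpos, hx]
      rw [h3, hμ1, div_mul_eq_div_div] at hb
      exact (div_le_div_iff_of_pos_right hnpos).mp hb
    -- |sin(πx)| ≥ 2|x|
    have hs1 : Real.sin (π * |x|) ≤ |Real.sin (π * x)| := by
      rcases le_or_gt 0 x with hc | hc
      · rw [abs_of_nonneg hc]; exact le_abs_self _
      · rw [abs_of_neg hc, mul_neg, Real.sin_neg]; exact neg_le_abs _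
    have hs2 : 2 * |x| ≤ Real.sin (π * |x|) := by
      have := Real.mul_le_sin (x := π * |x|) (by positivity)
        (by nlinarith [Real.pi_pos, abs_nonneg x])
      calc 2 * |x| = 2 / π * (π * |x|) := by field_simp
        _ ≤ _ := this
    have h4x : 4 * C / (n : ℝ) ^ μ ≤ 4 * |x| := by
      have hp : (0:ℝ) < (n : ℝ) ^ μ := Real.rpow_pos_of_pos hnpos μ
      rw [div_le_iff₀ hp] at hxlb ⊢
      nlinarith
    nlinarith [hs1.trans' hs2]
  -- comparison
  have hsum : Summable (fun n : ℕ => 1 / (4 * C) * (1 / ((n + B₀ : ℕ) : ℝ) ^ 2)) := by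
    apply Summable.mul_left
    have h0 : Summable (fun n : ℕ => 1 / (n : ℝ) ^ 2) :=
      Real.summable_one_div_nat_pow.mpr one_lt_two
    exact (summable_nat_add_iff (f := fun n : ℕ => 1 / (n : ℝ) ^ 2) B₀).mpr h0
  apply Summable.of_nonneg_of_le (fun n => by positivity) _ hsum
  intro n
  set N : ℕ := n + B₀ with hN
  have hnB : B₀ ≤ N := by omega
  have hN1 : (1 : ℝ) ≤ (N : ℝ) := by exact_mod_cast hB₀.trans hnB
  have hNpos : (0 : ℝ) < N := by linarith
  have hkey := key N hnB
  have hμpos : (0:ℝ) < (N : ℝ) ^ μ := Real.rpow_pos_of_pos hNpos μ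
  have hbpos : (0:ℝ) < 4 * C / (N : ℝ) ^ μ := by positivity
  have hkpos : (0:ℝ) < (N : ℝ) ^ k := by positivity
  have hpow : ((N : ℝ) ^ μ) * (N : ℝ) ^ 2 ≤ (N : ℝ) ^ k := by
    have h5 := Real.rpow_le_rpow_of_exponent_le hN1 hk
    rw [Real.rpow_natCast] at h5
    calc ((N : ℝ) ^ μ) * (N : ℝ) ^ 2 = (N : ℝ) ^ (μ + 2) := by
          rw [Real.rpow_add hNpos, show ((2:ℝ)) = ((2:ℕ):ℝ) by norm_num,
            Real.rpow_natCast]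
      _ ≤ _ := h5
  calc 1 / ((N : ℝ) ^ k * ‖(1 : ℂ) - Complex.exp (2 * Real.pi * Complex.I * N * α)‖)
      ≤ 1 / ((N : ℝ) ^ k * (4 * C / (N : ℝ) ^ μ)) := by
        apply one_div_le_one_div_of_le (by positivity)
        exact mul_le_mul_of_nonneg_left hkey (le_of_lt hkpos)
    _ ≤ 1 / (4 * C) * (1 / ((N : ℝ)) ^ 2) := by
        rw [one_div_mul_one_div, div_le_div_iff₀ (by positivity) (by positivity)]
        have : (N:ℝ) ^ k * (4 * C / (N : ℝ) ^ μ) = 4 * C * ((N:ℝ)^k / (N:ℝ)^μ) := by ring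
        rw [this]
        have h6 : (N:ℝ)^2 ≤ (N:ℝ)^k / (N:ℝ)^μ := (le_div_iff₀ hμpos).mpr (by nlinarith)
        nlinarith [h6, hC]
end

section
/- Let a : ℕ → ℂ with ∑_{n ≤ x} a(n) ~ (log x)^N as x → ∞ for some integer N ≥ 0, and let k ≥ 1 be an integer. Then the Riesz mean R_k(x) = (1/k!) ∑_{n ≤ x} a(n) (log(x/n))^k satisfies R_k(x) ~ (N! / (N+k)!) (log x)^{N+k} as x → ∞. -/
open Filter Topology MeasureTheory Set intervalIntegral

-- integrability of bounded measurable function on an interval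
theorem II_of_bdd {f : ℝ → ℂ} {a b : ℝ} (C : ℝ) (hf : Measurable f)
    (hC : ∀ t ∈ Set.uIoc a b, ‖f t‖ ≤ C) : IntervalIntegrable f volume a b := by
  apply (_root_.intervalIntegrable_const (c := C)).mono_fun hf.aestronglyMeasurable.restrict
  filter_upwards [ae_restrict_mem measurableSet_uIoc] with t ht
  simpa using (hC t ht).trans (le_abs_self C)

-- FTC: ∫ (log t - log c)^j / t
theorem ftc1 (j : ℕ) {c x : ℝ} (hc : 0 < c) (hcx : c ≤ x) :
    ∫ t in c..x, (Real.log t - Real.log c) ^ j / t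
      = (Real.log x - Real.log c) ^ (j + 1) / (j + 1) := by
  have key : ∀ t ∈ Set.uIcc c x, HasDerivAt
      (fun u => (Real.log u - Real.log c) ^ (j + 1) / (j + 1))
      ((Real.log t - Real.log c) ^ j / t) t := by
    intro t ht
    rw [Set.uIcc_of_le hcx] at ht
    have ht0 : (0:ℝ) < t := lt_of_lt_of_le hc ht.1
    have h1 : HasDerivAt (fun u => Real.log u - Real.log c) t⁻¹ t := by
      simpa using (Real.hasDerivAt_log ht0.ne').sub_const (Real.log c)
    have h2 := (h1.pow (j + 1)).div_const ((j:ℝ) + 1)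
    refine h2.congr_deriv ?_
    have : ((j:ℝ) + 1) ≠ 0 := by positivity
    rw [Nat.add_sub_cancel]; push_cast
    field_simp
  have hcont : ContinuousOn (fun t => (Real.log t - Real.log c) ^ j / t) (Set.uIcc c x) := by
    rw [Set.uIcc_of_le hcx]
    apply ContinuousOn.div
    · exact ((Real.continuousOn_log.mono (fun t ht => by
        exact ne_of_gt (lt_of_lt_of_le hc ht.1))).sub continuousOn_const).pow j
    · exact continuousOn_id
    · exact fun t ht => ne_of_gt (lt_of_lt_of_le hc ht.1)
  rw [integral_eq_sub_of_hasDerivAt key (hcont.intervalIntegrable)]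
  simp

theorem ftc2 (j : ℕ) {c x : ℝ} (hc : 1 ≤ c) (hcx : c ≤ x) :
    ∫ t in c..x, Real.log (t / c) ^ j / t
      = Real.log (x / c) ^ (j + 1) / (j + 1) := by
  have hc0 : (0:ℝ) < c := lt_of_lt_of_le one_pos hc
  have h1 : ∀ t ∈ Set.uIcc c x, Real.log (t / c) ^ j / t
      = (Real.log t - Real.log c) ^ j / t := by
    intro t ht
    rw [Set.uIcc_of_le hcx] at ht
    rw [Real.log_div (ne_of_gt (lt_of_lt_of_le hc0 ht.1)) (ne_of_gt hc0)]
  rw [integral_congr h1, ftc1 j hc0 hcx,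
    Real.log_div (ne_of_gt (lt_of_lt_of_le hc0 hcx)) (ne_of_gt hc0)]

noncomputable def T (a : ℕ → ℂ) (j : ℕ) (x : ℝ) : ℂ :=
  (j.factorial : ℂ)⁻¹ * ∑ n ∈ Finset.Icc 1 ⌊x⌋₊, a n * ((Real.log (x / n) ^ j : ℝ) : ℂ)

theorem measurable_T (a : ℕ → ℂ) (j : ℕ) : Measurable (T a j) := by
  have key : ∀ m : ℕ, Measurable fun x : ℝ =>
      (j.factorial : ℂ)⁻¹ * ∑ n ∈ Finset.Icc 1 m, a n * ((Real.log (x / n) ^ j : ℝ) : ℂ) := by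
    intro m
    apply Measurable.const_mul
    apply Finset.measurable_sum
    intro n _
    apply Measurable.const_mul
    apply Complex.measurable_ofReal.comp
    exact ((Real.measurable_log.comp (measurable_id.div_const _)).pow_const j)
  have h1 : Measurable fun p : ℝ × ℕ =>
      (j.factorial : ℂ)⁻¹ * ∑ n ∈ Finset.Icc 1 p.2, a n * ((Real.log (p.1 / n) ^ j : ℝ) : ℂ) :=
    measurable_from_prod_countable_left key
  have h2 : Measurable fun x : ℝ => (x, ⌊x⌋₊) :=
    measurable_id.prodMk (Measurable.nat_floor measurable_id)
  have h3 := h1.comp h2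
  exact h3

theorem norm_T_le (a : ℕ → ℂ) (j : ℕ) {t X : ℝ} (ht : 1 ≤ t) (htX : t ≤ X) :
    ‖T a j t‖ ≤ (∑ n ∈ Finset.Icc 1 ⌊X⌋₊, ‖a n‖) * Real.log X ^ j := by
  have hX1 : (1:ℝ) ≤ X := le_trans ht htX
  have hlogX : 0 ≤ Real.log X := Real.log_nonneg hX1
  have step1 : ‖T a j t‖ ≤ ∑ n ∈ Finset.Icc 1 ⌊t⌋₊, ‖a n * ((Real.log (t / n) ^ j : ℝ) : ℂ)‖ := by
    rw [T]
    calc ‖(j.factorial : ℂ)⁻¹ * ∑ n ∈ Finset.Icc 1 ⌊t⌋₊, a n * ((Real.log (t / n) ^ j : ℝ) : ℂ)‖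
        = ‖((j.factorial : ℂ))⁻¹‖ * ‖∑ n ∈ Finset.Icc 1 ⌊t⌋₊, a n * ((Real.log (t / n) ^ j : ℝ) : ℂ)‖ := norm_mul _ _
      _ ≤ 1 * ‖∑ n ∈ Finset.Icc 1 ⌊t⌋₊, a n * ((Real.log (t / n) ^ j : ℝ) : ℂ)‖ := by
          apply mul_le_mul_of_nonneg_right _ (norm_nonneg _)
          rw [norm_inv, inv_le_one_iff₀]
          right
          simpa using (Nat.one_le_iff_ne_zero.mpr j.factorial_ne_zero)
      _ = ‖∑ n ∈ Finset.Icc 1 ⌊t⌋₊, a n * ((Real.log (t / n) ^ j : ℝ) : ℂ)‖ := one_mul _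
      _ ≤ ∑ n ∈ Finset.Icc 1 ⌊t⌋₊, ‖a n * ((Real.log (t / n) ^ j : ℝ) : ℂ)‖ := norm_sum_le _ _
  have step2 : ∀ n ∈ Finset.Icc 1 ⌊t⌋₊,
      ‖a n * ((Real.log (t / n) ^ j : ℝ) : ℂ)‖ ≤ ‖a n‖ * Real.log X ^ j := by
    intro n hn
    rw [Finset.mem_Icc] at hn
    have hn1 : (1:ℝ) ≤ (n:ℝ) := by exact_mod_cast hn.1
    have hnt : (n:ℝ) ≤ t := le_trans (by exact_mod_cast hn.2) (Nat.floor_le (by linarith))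
    have h1 : (1:ℝ) ≤ t / n := (one_le_div (by linarith)).mpr hnt
    have h2 : t / n ≤ X := le_trans (div_le_self (by linarith) hn1) htX
    have hlog1 : 0 ≤ Real.log (t / n) := Real.log_nonneg h1
    have hlog2 : Real.log (t / n) ≤ Real.log X := Real.log_le_log (by linarith) h2
    rw [norm_mul, Complex.norm_real, Real.norm_eq_abs, abs_pow,
      abs_of_nonneg hlog1]
    exact mul_le_mul_of_nonneg_left (pow_le_pow_left₀ hlog1 hlog2 j) (norm_nonneg _)
  calc ‖T a j t‖ ≤ ∑ n ∈ Finset.Icc 1 ⌊t⌋₊, ‖a n * ((Real.log (t / n) ^ j : ℝ) : ℂ)‖ := step1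
    _ ≤ ∑ n ∈ Finset.Icc 1 ⌊t⌋₊, ‖a n‖ * Real.log X ^ j := Finset.sum_le_sum step2
    _ = (∑ n ∈ Finset.Icc 1 ⌊t⌋₊, ‖a n‖) * Real.log X ^ j := (Finset.sum_mul _ _ _).symm
    _ ≤ (∑ n ∈ Finset.Icc 1 ⌊X⌋₊, ‖a n‖) * Real.log X ^ j := by
        apply mul_le_mul_of_nonneg_right _ (pow_nonneg hlogX j)
        apply Finset.sum_le_sum_of_subset_of_nonneg
        · exact Finset.Icc_subset_Icc le_rfl (Nat.floor_mono htX)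
        · intro n _ _; exact norm_nonneg _

theorem logII (M : ℕ) {u v : ℝ} (hu : 1 ≤ u) (hv : 1 ≤ v) :
    IntervalIntegrable (fun t => Real.log t ^ M / t) volume u v := by
  apply ContinuousOn.intervalIntegrable
  have h1 : ∀ t ∈ Set.uIcc u v, t ≠ 0 := by
    intro t ht
    rw [Set.mem_uIcc] at ht
    rcases ht with ⟨h, _⟩ | ⟨h, _⟩ <;> · intro h0; rw [h0] at h; linarith
  exact ((Real.continuousOn_log.mono (fun t ht => h1 t ht)).pow M).div
    continuousOn_id h1

theorem ftc3 (M : ℕ) {x : ℝ} (hx : 1 ≤ x) :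
    ∫ t in (1:ℝ)..x, Real.log t ^ M / t = Real.log x ^ (M + 1) / (M + 1) := by
  have h := ftc2 M (le_refl 1) hx
  simp only [div_one] at h
  exact h

theorem II_ofReal {f : ℝ → ℝ} {a b : ℝ} (h : IntervalIntegrable f volume a b) :
    IntervalIntegrable (fun t => ((f t : ℝ) : ℂ)) volume a b := ⟨h.1.ofReal, h.2.ofReal⟩

theorem key_step {F : ℝ → ℂ} {M : ℕ} (hmeas : Measurable F)
    (hbd : ∀ X : ℝ, ∃ C, ∀ t ∈ Set.Icc (1:ℝ) X, ‖F t‖ ≤ C)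
    (htend : Tendsto (fun x => F x / ((Real.log x ^ M : ℝ) : ℂ)) atTop (𝓝 1)) :
    Tendsto (fun x => (∫ t in (1:ℝ)..x, F t / t) /
        (((M:ℂ) + 1)⁻¹ * ((Real.log x ^ (M + 1) : ℝ) : ℂ))) atTop (𝓝 1) := by
  set E : ℝ → ℂ := fun t => F t - ((Real.log t ^ M : ℝ) : ℂ) with hE
  have hEmeas : Measurable E :=
    hmeas.sub (Complex.measurable_ofReal.comp (Real.measurable_log.pow_const M))
  -- integrability of E/t on [1, x]
  have hIntE : ∀ x : ℝ, 1 ≤ x → IntervalIntegrable (fun t => E t / t) volume 1 x := by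
    intro x hx
    obtain ⟨C, hC⟩ := hbd x
    apply II_of_bdd (C + Real.log x ^ M) (hEmeas.div Complex.measurable_ofReal)
    intro t ht
    rw [Set.uIoc_of_le hx] at ht
    have ht1 : 1 < t := ht.1
    have hlt : 0 ≤ Real.log t := Real.log_nonneg ht1.le
    have hlx : Real.log t ≤ Real.log x := Real.log_le_log (by linarith) ht.2
    have h1 : ‖E t / (t:ℂ)‖ ≤ ‖E t‖ := by
      rw [norm_div, Complex.norm_real, Real.norm_eq_abs, abs_of_pos (by linarith : (0:ℝ) < t)]
      exact div_le_self (norm_nonneg _) ht1.le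
    refine h1.trans ?_
    refine (norm_sub_le _ _).trans ?_
    apply add_le_add (hC t ⟨ht1.le, ht.2⟩)
    rw [Complex.norm_real, Real.norm_eq_abs, abs_pow, abs_of_nonneg hlt]
    exact pow_le_pow_left₀ hlt hlx M
  -- the split identity
  have hsplit : ∀ x : ℝ, 1 ≤ x → (∫ t in (1:ℝ)..x, F t / t)
      = ((Real.log x ^ (M + 1) / (M + 1) : ℝ) : ℂ) + ∫ t in (1:ℝ)..x, E t / t := by
    intro x hx
    have hIl : IntervalIntegrable (fun t => ((Real.log t ^ M / t : ℝ) : ℂ)) volume 1 x :=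
      II_ofReal (logII M le_rfl hx)
    have heq : ∀ t ∈ Set.uIcc (1:ℝ) x, F t / t
        = ((Real.log t ^ M / t : ℝ) : ℂ) + E t / t := by
      intro t ht
      rw [Set.uIcc_of_le hx] at ht
      have ht0 : (0:ℝ) < t := lt_of_lt_of_le one_pos ht.1
      have htne : ((t:ℝ):ℂ) ≠ 0 := by exact_mod_cast ht0.ne'
      simp only [hE]
      push_cast
      field_simp
      ring
    rw [integral_congr heq, integral_add hIl (hIntE x hx), intervalIntegral.integral_ofReal,
      ftc3 M hx]
  -- the error term is little-o
  have oE : Tendsto (fun x => (∫ t in (1:ℝ)..x, E t / t) /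
      ((Real.log x ^ (M + 1) : ℝ) : ℂ)) atTop (𝓝 0) := by
    rw [NormedAddCommGroup.tendsto_nhds_zero]
    intro ε hε
    set δ := ε / 2 with hδdef
    have hδ : 0 < δ := by positivity
    -- eventually ‖E t‖ ≤ δ log t ^ M
    have hE0 : Tendsto (fun x => F x / ((Real.log x ^ M : ℝ) : ℂ) - 1) atTop (𝓝 0) := by
      simpa using htend.sub_const 1
    have hev : ∀ᶠ t in atTop, ‖E t‖ ≤ δ * Real.log t ^ M := by
      filter_upwards [NormedAddCommGroup.tendsto_nhds_zero.mp hE0 δ hδ,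
        eventually_ge_atTop (2:ℝ)] with t h1 h2
      have hlog : 0 < Real.log t := Real.log_pos (by linarith)
      have hne : ((Real.log t ^ M : ℝ) : ℂ) ≠ 0 := by
        exact_mod_cast (pow_ne_zero M hlog.ne')
      have : E t = (F t / ((Real.log t ^ M : ℝ) : ℂ) - 1) * ((Real.log t ^ M : ℝ) : ℂ) := by
        simp only [hE]
        push_cast at hne ⊢
        field_simp
      rw [this, norm_mul, Complex.norm_real, Real.norm_eq_abs, abs_pow, abs_of_nonneg hlog.le]
      exact mul_le_mul_of_nonneg_right h1.le (by positivity)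
    obtain ⟨x₀, hx₀⟩ := eventually_atTop.mp hev
    set X₀ := max x₀ 2 with hX₀def
    have hX₀2 : (2:ℝ) ≤ X₀ := le_max_right _ _
    have hX₀1 : (1:ℝ) ≤ X₀ := by linarith
    set C₀ := ‖∫ t in (1:ℝ)..X₀, E t / t‖ with hC₀def
    -- main bound
    have claim : ∀ x : ℝ, X₀ ≤ x → ‖∫ t in (1:ℝ)..x, E t / t‖
        ≤ C₀ + δ * Real.log x ^ (M + 1) := by
      intro x hx
      have hx1 : 1 ≤ x := le_trans hX₀1 hx
      have hIx := hIntE x hx1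
      have hmem0 : X₀ ∈ Set.uIcc (1:ℝ) x := by
        rw [Set.mem_uIcc]; left; exact ⟨hX₀1, hx⟩
      have h1 : IntervalIntegrable (fun t => E t / t) volume 1 X₀ :=
        hIx.mono_set (Set.uIcc_subset_uIcc Set.left_mem_uIcc hmem0)
      have h2 : IntervalIntegrable (fun t => E t / t) volume X₀ x :=
        hIx.mono_set (Set.uIcc_subset_uIcc hmem0 Set.right_mem_uIcc)
      rw [← integral_add_adjacent_intervals h1 h2]
      refine (norm_add_le _ _).trans ?_
      apply add_le_add le_rfl
      -- bound the tail
      have hbound : ‖∫ t in X₀..x, E t / t‖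
          ≤ |∫ t in X₀..x, δ * (Real.log t ^ M / t)| := by
        apply intervalIntegral.norm_integral_le_abs_of_norm_le
        · filter_upwards [ae_restrict_mem measurableSet_uIoc] with t ht
          rw [Set.uIoc_of_le hx] at ht
          have ht2 : (2:ℝ) ≤ t := le_trans hX₀2 ht.1.le
          have ht0 : (0:ℝ) < t := by linarith
          have hEt : ‖E t‖ ≤ δ * Real.log t ^ M := hx₀ t (le_trans (le_max_left _ _) ht.1.le)
          rw [norm_div, Complex.norm_real, Real.norm_eq_abs, abs_of_pos ht0, ← mul_div_assoc]
          gcongr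
        · exact (logII M hX₀1 hx1).const_mul δ
      refine hbound.trans ?_
      rw [intervalIntegral.integral_const_mul]
      have hval : ∫ t in X₀..x, Real.log t ^ M / t
          = Real.log x ^ (M + 1) / (M + 1) - Real.log X₀ ^ (M + 1) / (M + 1) := by
        have hadj := integral_add_adjacent_intervals (logII M (le_refl 1) hX₀1)
          (logII M hX₀1 hx1)
        rw [ftc3 M hX₀1, ftc3 M hx1] at hadj
        linarith [hadj]
      rw [hval]
      have hlogX₀ : 0 ≤ Real.log X₀ := Real.log_nonneg hX₀1
      have hlogx : 0 ≤ Real.log x := Real.log_nonneg hx1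
      have hmono : Real.log X₀ ≤ Real.log x := Real.log_le_log (by linarith) hx
      have h5 : (0:ℝ) ≤ Real.log x ^ (M+1) / (M+1) - Real.log X₀ ^ (M+1) / (M+1) := by
        rw [sub_nonneg]
        gcongr
      rw [abs_mul, abs_of_pos hδ, abs_of_nonneg h5]
      apply mul_le_mul_of_nonneg_left _ hδ.le
      have hM1 : (1:ℝ) ≤ (M:ℝ) + 1 := by
        have := Nat.cast_nonneg (α := ℝ) M; linarith
      calc Real.log x ^ (M+1) / (M+1) - Real.log X₀ ^ (M+1) / (M+1)
          ≤ Real.log x ^ (M+1) / (M+1) := by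
            have : (0:ℝ) ≤ Real.log X₀ ^ (M+1) / (M+1) := by positivity
            linarith
        _ ≤ Real.log x ^ (M+1) := by
            apply div_le_self (by positivity) hM1
    -- finish
    have hC₀0 : Tendsto (fun x : ℝ => C₀ / Real.log x ^ (M + 1)) atTop (𝓝 0) := by
      apply Tendsto.div_atTop tendsto_const_nhds
      exact (tendsto_pow_atTop (Nat.succ_ne_zero M)).comp Real.tendsto_log_atTop
    filter_upwards [eventually_ge_atTop X₀, eventually_ge_atTop (2:ℝ),
      hC₀0.eventually (eventually_lt_nhds hδ)] with x hxX₀ hx2 hxC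
    have hlog : 0 < Real.log x := Real.log_pos (by linarith)
    have hP : 0 < Real.log x ^ (M + 1) := by positivity
    rw [norm_div, Complex.norm_real, Real.norm_eq_abs, abs_of_pos hP]
    calc ‖∫ t in (1:ℝ)..x, E t / t‖ / Real.log x ^ (M + 1)
        ≤ (C₀ + δ * Real.log x ^ (M + 1)) / Real.log x ^ (M + 1) := by
          gcongr
          exact claim x hxX₀
      _ = C₀ / Real.log x ^ (M + 1) + δ := by
          rw [add_div, mul_div_assoc, div_self hP.ne', mul_one]
      _ < δ + δ := by linarith [hxC]
      _ = ε := by rw [hδdef]; ring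
  -- combine
  have hfinal : ∀ᶠ x in atTop, (∫ t in (1:ℝ)..x, F t / t) /
      (((M:ℂ) + 1)⁻¹ * ((Real.log x ^ (M + 1) : ℝ) : ℂ))
      = 1 + ((M:ℂ) + 1) * ((∫ t in (1:ℝ)..x, E t / t) / ((Real.log x ^ (M + 1) : ℝ) : ℂ)) := by
    filter_upwards [eventually_ge_atTop (2:ℝ)] with x hx2
    have hx1 : (1:ℝ) ≤ x := by linarith
    have hlog : 0 < Real.log x := Real.log_pos (by linarith)
    have hL : ((Real.log x ^ (M + 1) : ℝ) : ℂ) ≠ 0 := by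
      exact_mod_cast pow_ne_zero _ hlog.ne'
    have hM : ((M:ℂ) + 1) ≠ 0 := Nat.cast_add_one_ne_zero M
    have hD : ((M:ℂ) + 1)⁻¹ * ((Real.log x ^ (M + 1) : ℝ) : ℂ) ≠ 0 :=
      mul_ne_zero (inv_ne_zero hM) hL
    rw [hsplit x hx1]
    have ha : ((Real.log x ^ (M + 1) / (M + 1) : ℝ) : ℂ)
        = ((M:ℂ) + 1)⁻¹ * ((Real.log x ^ (M + 1) : ℝ) : ℂ) := by
      push_cast
      ring
    rw [add_div, ha, div_self hD, mul_comm (((M:ℂ) + 1)⁻¹) _, ← div_div, div_inv_eq_mul]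
    ring
  have htend2 : Tendsto (fun x => 1 + ((M:ℂ) + 1) *
      ((∫ t in (1:ℝ)..x, E t / t) / ((Real.log x ^ (M + 1) : ℝ) : ℂ))) atTop (𝓝 1) := by
    have := (oE.const_mul ((M:ℂ) + 1)).const_add 1
    simpa using this
  exact htend2.congr' (hfinal.mono fun x hx => hx.symm)

theorem T_succ_eq (a : ℕ → ℂ) (j : ℕ) {x : ℝ} (hx : 1 ≤ x) :
    T a (j + 1) x = ∫ t in (1:ℝ)..x, T a j t / t := by
  set g : ℕ → ℝ → ℂ := fun n t =>
    if (n:ℝ) ≤ t then a n * ((Real.log (t / n) ^ j : ℝ) : ℂ) else 0 with hg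
  have hlogx : 0 ≤ Real.log x := Real.log_nonneg hx
  -- pointwise rewriting of T a j t for t in [1, x]
  have stepA : ∀ t ∈ Set.uIcc (1:ℝ) x, T a j t / t
      = (j.factorial : ℂ)⁻¹ * ∑ n ∈ Finset.Icc 1 ⌊x⌋₊, g n t / t := by
    intro t ht
    rw [Set.uIcc_of_le hx] at ht
    have ht0 : (0:ℝ) ≤ t := le_trans zero_le_one ht.1
    have hsum : ∑ n ∈ Finset.Icc 1 ⌊t⌋₊, a n * ((Real.log (t / n) ^ j : ℝ) : ℂ)
        = ∑ n ∈ Finset.Icc 1 ⌊x⌋₊, g n t := by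
      rw [← Finset.sum_subset (Finset.Icc_subset_Icc le_rfl (Nat.floor_mono ht.2))
        (fun n hn hn' => ?_)]
      · apply Finset.sum_congr rfl
        intro n hn
        rw [Finset.mem_Icc] at hn
        have : (n:ℝ) ≤ t := le_trans (by exact_mod_cast hn.2) (Nat.floor_le ht0)
        simp [hg, this]
      · rw [Finset.mem_Icc] at hn hn'
        have h2 : ¬ ((n:ℝ) ≤ t) := by
          intro hc
          exact hn' ⟨hn.1, Nat.le_floor hc⟩
        simp [hg, h2]
    rw [T, hsum, mul_div_assoc, Finset.sum_div]
  rw [integral_congr stepA]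
  -- integrability of each piece
  have hint : ∀ n : ℕ, n ∈ Finset.Icc 1 ⌊x⌋₊ →
      IntervalIntegrable (fun t => g n t / t) volume 1 x := by
    intro n hn
    rw [Finset.mem_Icc] at hn
    have hmeas : Measurable fun t : ℝ => g n t / t := by
      apply Measurable.div _ Complex.measurable_ofReal
      apply Measurable.ite (measurableSet_le measurable_const measurable_id)
      · exact (Complex.measurable_ofReal.comp
          ((Real.measurable_log.comp (measurable_id.div_const _)).pow_const j)).const_mul _
      · exact measurable_const
    apply II_of_bdd (‖a n‖ * Real.log x ^ j) hmeas
    intro t ht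
    rw [Set.uIoc_of_le hx] at ht
    have ht1 : 1 < t := ht.1
    have htx : t ≤ x := ht.2
    have hn1 : (1:ℝ) ≤ (n:ℝ) := by exact_mod_cast hn.1
    rw [norm_div, Complex.norm_real, Real.norm_eq_abs, abs_of_pos (by linarith)]
    have hb : ‖g n t‖ ≤ ‖a n‖ * Real.log x ^ j := by
      by_cases hc : (n:ℝ) ≤ t
      · have h1 : (1:ℝ) ≤ t / n := (one_le_div (by linarith)).mpr hc
        have h2 : t / n ≤ x := le_trans (div_le_self (by linarith) hn1) htx
        have hl1 : 0 ≤ Real.log (t / n) := Real.log_nonneg h1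
        have hl2 : Real.log (t / n) ≤ Real.log x := Real.log_le_log (by linarith) h2
        simp only [hg, if_pos hc, norm_mul, Complex.norm_real, Real.norm_eq_abs,
          abs_pow, abs_of_nonneg hl1]
        exact mul_le_mul_of_nonneg_left (pow_le_pow_left₀ hl1 hl2 j) (norm_nonneg _)
      · simp only [hg, if_neg hc, norm_zero]
        positivity
    exact le_trans (div_le_self (norm_nonneg _) ht1.le) hb
  rw [intervalIntegral.integral_const_mul]
  have hfs := intervalIntegral.integral_finset_sum (μ := volume) (a := 1) (b := x) hint
  rw [hfs]
  -- compute each integral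
  have hval : ∀ n : ℕ, n ∈ Finset.Icc 1 ⌊x⌋₊ →
      (∫ t in (1:ℝ)..x, g n t / t)
        = a n * ((Real.log (x / n) ^ (j + 1) / (j + 1) : ℝ) : ℂ) := by
    intro n hn
    have hn' := hn
    rw [Finset.mem_Icc] at hn'
    have hn1 : (1:ℝ) ≤ (n:ℝ) := by exact_mod_cast hn'.1
    have hnx : (n:ℝ) ≤ x := le_trans (by exact_mod_cast hn'.2) (Nat.floor_le (by linarith))
    have hII := hint n hn
    have hmem : (n:ℝ) ∈ Set.uIcc (1:ℝ) x := by
      rw [Set.mem_uIcc]; left; exact ⟨hn1, hnx⟩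
    have hmem1 : (1:ℝ) ∈ Set.uIcc (1:ℝ) x := Set.left_mem_uIcc
    have hmemx : x ∈ Set.uIcc (1:ℝ) x := Set.right_mem_uIcc
    have h1 : IntervalIntegrable (fun t => g n t / t) volume 1 n :=
      hII.mono_set (Set.uIcc_subset_uIcc hmem1 hmem)
    have h2 : IntervalIntegrable (fun t => g n t / t) volume n x :=
      hII.mono_set (Set.uIcc_subset_uIcc hmem hmemx)
    rw [← integral_add_adjacent_intervals h1 h2]
    have hz : (∫ t in (1:ℝ)..(n:ℝ), g n t / t) = 0 := by
      rw [← intervalIntegral.integral_zero (a := (1:ℝ)) (b := (n:ℝ)) (μ := volume)]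
      apply intervalIntegral.integral_congr_ae
      have hne : ∀ᵐ t : ℝ, t ≠ (n:ℝ) := by
        rw [MeasureTheory.ae_iff]
        simp only [ne_eq, not_not]
        have : {t : ℝ | t = (n:ℝ)} = {(n:ℝ)} := by ext t; simp
        rw [this]
        exact Real.volume_singleton
      filter_upwards [hne] with t htne htI
      rw [Set.uIoc_of_le hn1] at htI
      have : ¬ ((n:ℝ) ≤ t) := by
        rcases lt_or_eq_of_le htI.2 with hlt | heq
        · exact not_le.mpr hlt
        · exact absurd heq htne
      simp [hg, this]
    rw [hz, zero_add]
    have hcongr : ∀ t ∈ Set.uIcc (n:ℝ) x, g n t / t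
        = a n * (((Real.log (t / n) ^ j / t : ℝ)) : ℂ) := by
      intro t ht
      rw [Set.uIcc_of_le hnx] at ht
      have : (n:ℝ) ≤ t := ht.1
      simp [hg, this, mul_div_assoc]
    rw [integral_congr hcongr, intervalIntegral.integral_const_mul, intervalIntegral.integral_ofReal,
      ftc2 j hn1 hnx]
  rw [Finset.sum_congr rfl hval]
  -- final algebra
  rw [T]
  have : ∀ n : ℕ, n ∈ Finset.Icc 1 ⌊x⌋₊ →
      a n * ((Real.log (x / n) ^ (j + 1) / (j + 1) : ℝ) : ℂ)
        = ((j:ℂ) + 1)⁻¹ * (a n * ((Real.log (x / n) ^ (j + 1) : ℝ) : ℂ)) := by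
    intro n _
    push_cast
    ring
  rw [Finset.sum_congr rfl this, ← Finset.mul_sum]
  rw [Nat.factorial_succ]
  push_cast
  rw [mul_inv]
  ring


theorem main_aux (a : ℕ → ℂ) (N : ℕ)
    (h : Tendsto (fun x : ℝ =>
        (∑ n ∈ Finset.Icc 1 ⌊x⌋₊, a n) / ((Real.log x ^ N : ℝ) : ℂ))
      atTop (𝓝 1)) :
    ∀ j : ℕ, Tendsto (fun x : ℝ => T a j x /
      (((N.factorial : ℂ) / ((N + j).factorial : ℂ)) * ((Real.log x ^ (N + j) : ℝ) : ℂ)))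
      atTop (𝓝 1) := by
  intro j
  induction j with
  | zero =>
    apply h.congr
    intro x
    have h1 : ((N.factorial : ℂ) / ((N + 0).factorial : ℂ)) = 1 := by
      rw [Nat.add_zero]
      exact div_self (Nat.cast_ne_zero.mpr N.factorial_ne_zero)
    rw [T, h1, one_mul, Nat.add_zero]
    simp
  | succ j ih =>
    set b : ℂ := ((N + j).factorial : ℂ) / (N.factorial : ℂ) with hb
    set F : ℝ → ℂ := fun x => b * T a j x with hF
    have hN0 : (N.factorial : ℂ) ≠ 0 := Nat.cast_ne_zero.mpr N.factorial_ne_zero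
    have hNj0 : (((N + j).factorial : ℕ) : ℂ) ≠ 0 := Nat.cast_ne_zero.mpr (N + j).factorial_ne_zero
    have hmeasF : Measurable F := (measurable_T a j).const_mul b
    have hbdF : ∀ X : ℝ, ∃ C, ∀ t ∈ Set.Icc (1:ℝ) X, ‖F t‖ ≤ C := by
      intro X
      refine ⟨‖b‖ * ((∑ n ∈ Finset.Icc 1 ⌊X⌋₊, ‖a n‖) * Real.log X ^ j), ?_⟩
      intro t ht
      rw [hF, norm_mul]
      exact mul_le_mul_of_nonneg_left (norm_T_le a j ht.1 ht.2) (norm_nonneg b)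
    have htendF : Tendsto (fun x => F x / ((Real.log x ^ (N + j) : ℝ) : ℂ)) atTop (𝓝 1) := by
      apply ih.congr
      intro x
      have hbinv : b = (((N.factorial : ℂ) / ((N + j).factorial : ℂ)))⁻¹ := by
        rw [hb, inv_div]
      rw [mul_comm ((N.factorial : ℂ) / ((N + j).factorial : ℂ)) _, ← div_div,
        div_eq_inv_mul (T a j x / _) _, ← hbinv, hF, mul_div_assoc]
    have key := key_step hmeasF hbdF htendF
    refine Tendsto.congr' ?_ key
    filter_upwards [eventually_ge_atTop (2:ℝ)] with x hx2
    have hx1 : (1:ℝ) ≤ x := by linarith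
    have hInt : (∫ t in (1:ℝ)..x, F t / t) = b * T a (j + 1) x := by
      have heq : (fun t : ℝ => F t / (t:ℂ)) = fun t => b * (T a j t / t) := by
        funext t
        rw [hF, mul_div_assoc]
      rw [heq, intervalIntegral.integral_const_mul, ← T_succ_eq a j hx1]
    rw [hInt]
    have hlog : 0 < Real.log x := Real.log_pos (by linarith)
    have hL : ((Real.log x ^ (N + j + 1) : ℝ) : ℂ) ≠ 0 := by
      exact_mod_cast pow_ne_zero _ hlog.ne'
    have hM1 : (((N + j : ℕ) : ℂ) + 1) ≠ 0 := Nat.cast_add_one_ne_zero (N + j)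
    have hfact : (((N + j + 1).factorial : ℕ) : ℂ)
        = (((N + j : ℕ) : ℂ) + 1) * (((N + j).factorial : ℕ) : ℂ) := by
      rw [Nat.factorial_succ]
      push_cast
      ring
    have hexp : N + (j + 1) = N + j + 1 := rfl
    rw [hexp, hfact, hb]
    field_simp

theorem stmt14 (a : ℕ → ℂ) (N : ℕ)
    (h : Tendsto (fun x : ℝ =>
        (∑ n ∈ Finset.Icc 1 ⌊x⌋₊, a n) / ((Real.log x ^ N : ℝ) : ℂ))
      atTop (𝓝 1))
    (k : ℕ) (hk : 1 ≤ k) :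
    Tendsto (fun x : ℝ =>
        ((k.factorial : ℂ)⁻¹ * ∑ n ∈ Finset.Icc 1 ⌊x⌋₊,
            a n * ((Real.log (x / n) ^ k : ℝ) : ℂ)) /
          (((N.factorial : ℂ) / ((N + k).factorial : ℂ)) * ((Real.log x ^ (N + k) : ℝ) : ℂ)))
      atTop (𝓝 1) := by
  have := main_aux a N h k
  simpa only [T] using this
end

section
/- Let χ₃ be the non-principal Dirichlet character mod 3 and let f be the completely multiplicative function with f(3) = ε ∈ {+1, -1} and f(p) = χ₃(p) for all primes p ≠ 3. Then ∑_{n ≤ x} f(n) = O(log x). -/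
open Filter Asymptotics Finset

noncomputable def g16 (n : ℕ) : ℂ := if n % 3 = 1 then 1 else if n % 3 = 2 then -1 else 0

lemma g16_mul (m n : ℕ) : g16 (m*n) = g16 m * g16 n := by
  unfold g16
  have hm : m % 3 = 0 ∨ m % 3 = 1 ∨ m % 3 = 2 := by omega
  have hn : n % 3 = 0 ∨ n % 3 = 1 ∨ n % 3 = 2 := by omega
  have key : m * n % 3 = m % 3 * (n % 3) % 3 := Nat.mul_mod m n 3
  rcases hm with h|h|h <;> rcases hn with h'|h'|h' <;>
    rw [h, h'] at key ⊢ <;> norm_num at key ⊢ <;> simp [key]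

lemma g16_sum (N : ℕ) : ∑ n ∈ Finset.Icc 1 N, g16 n = if N % 3 = 1 then 1 else 0 := by
  induction N with
  | zero => simp
  | succ n ih =>
    rw [Finset.sum_Icc_succ_top (by omega), ih]
    have h : n % 3 = 0 ∨ n % 3 = 1 ∨ n % 3 = 2 := by omega
    rcases h with h|h|h <;>
      · have h1 : (n+1) % 3 = (n % 3 + 1) % 3 := by omega
        simp [g16, h1, h]

lemma fg16 (f : ℕ → ℂ) (hf1 : f 1 = 1)
    (hmul : ∀ m n : ℕ, f (m * n) = f m * f n)
    (hf : ∀ p : ℕ, p.Prime → p ≠ 3 →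
      f p = if p % 3 = 1 then 1 else if p % 3 = 2 then -1 else 0) :
    ∀ n : ℕ, ¬ (3 ∣ n) → f n = g16 n := by
  intro n
  induction n using Nat.strong_induction_on with
  | _ n ih =>
    intro hn
    match n, hn with
    | 0, hn => exact absurd (dvd_zero 3) hn
    | 1, hn => simpa [g16] using hf1
    | (k+2), hn =>
      set n := k + 2 with hn2
      have hp : n.minFac.Prime := Nat.minFac_prime (by omega)
      have hpd : n.minFac ∣ n := Nat.minFac_dvd n
      have hp3 : n.minFac ≠ 3 := by
        intro h; exact hn (h ▸ hpd)
      have hndvd : ¬ (3 ∣ (n / n.minFac)) := by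
        intro h; exact hn (h.trans (Nat.div_dvd_of_dvd hpd))
      have hlt : n / n.minFac < n := Nat.div_lt_self (by omega) hp.one_lt
      have heq : n = n.minFac * (n / n.minFac) := (Nat.mul_div_cancel' hpd).symm
      calc f n = f (n.minFac * (n / n.minFac)) := by rw [← heq]
        _ = f n.minFac * f (n / n.minFac) := hmul _ _
        _ = g16 n.minFac * g16 (n / n.minFac) := by
            rw [hf _ hp hp3, ih _ hlt hndvd]; rfl
        _ = g16 n := by rw [← g16_mul, ← heq]

lemma S_rec (f : ℕ → ℂ) (ε : ℂ) (hf3g : ∀ n : ℕ, ¬ (3 ∣ n) → f n = g16 n)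
    (hmulε : ∀ m : ℕ, f (3 * m) = ε * f m) (N : ℕ) :
    ∑ n ∈ Icc 1 N, f n
      = (∑ n ∈ Icc 1 N, g16 n) + ε * ∑ m ∈ Icc 1 (N / 3), f m := by
  rw [← Finset.sum_filter_add_sum_filter_not (Icc 1 N) (fun n => 3 ∣ n), add_comm]
  congr 1
  · rw [Finset.sum_congr rfl (fun n hn => hf3g n (Finset.mem_filter.mp hn).2)]
    rw [Finset.sum_filter]
    refine Finset.sum_congr rfl fun n _ => ?_
    by_cases h : 3 ∣ n
    · have h0 : n % 3 = 0 := by omega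
      simp [h, g16, h0]
    · simp [h]
  · have himg : (Icc 1 N).filter (fun n => 3 ∣ n) = (Icc 1 (N/3)).image (fun m => 3*m) := by
      ext a
      simp only [Finset.mem_filter, Finset.mem_image, Finset.mem_Icc]
      constructor
      · rintro ⟨⟨h1, h2⟩, c, rfl⟩
        exact ⟨c, by omega, rfl⟩
      · rintro ⟨m, hm, rfl⟩
        exact ⟨by omega, ⟨m, rfl⟩⟩
    rw [himg, Finset.sum_image (by intro a _ b _ h; simp only at h; omega), Finset.mul_sum]
    exact Finset.sum_congr rfl fun m _ => hmulε m

lemma S_bound (f : ℕ → ℂ) (ε : ℂ) (hε1 : ‖ε‖ = 1)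
    (hrec : ∀ N : ℕ, ∑ n ∈ Icc 1 N, f n
      = (∑ n ∈ Icc 1 N, g16 n) + ε * ∑ m ∈ Icc 1 (N / 3), f m) :
    ∀ N : ℕ, ‖∑ n ∈ Icc 1 N, f n‖ ≤ Nat.log 3 N + 1 := by
  intro N
  induction N using Nat.strong_induction_on with
  | _ N ih =>
    rcases Nat.eq_zero_or_pos N with rfl | hN
    · simp
    have hT : ‖∑ n ∈ Icc 1 N, g16 n‖ ≤ 1 := by
      rw [g16_sum]; split <;> simp
    have step : ‖∑ n ∈ Icc 1 N, f n‖ ≤ 1 + ‖∑ m ∈ Icc 1 (N / 3), f m‖ := by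
      rw [hrec N]
      calc _ ≤ ‖∑ n ∈ Icc 1 N, g16 n‖ + ‖ε * ∑ m ∈ Icc 1 (N / 3), f m‖ := norm_add_le _ _
        _ ≤ 1 + ‖∑ m ∈ Icc 1 (N / 3), f m‖ := by
            rw [norm_mul, hε1, one_mul]; exact add_le_add_left hT _
    rcases lt_or_ge N 3 with h3 | h3
    · have : N / 3 = 0 := by omega
      rw [this] at step
      have h0 : ∑ m ∈ Icc 1 (0:ℕ), f m = 0 := by simp
      rw [h0, norm_zero] at step
      have hnn : (0:ℝ) ≤ (Nat.log 3 N : ℝ) := Nat.cast_nonneg _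
      linarith
    · have hlt : N / 3 < N := Nat.div_lt_self (by omega) (by norm_num)
      have hlog : Nat.log 3 (N / 3) + 1 = Nat.log 3 N := by
        have h1 : 1 ≤ Nat.log 3 N := Nat.log_pos (by norm_num) h3
        have := Nat.log_div_base 3 N
        omega
      have := ih _ hlt
      have : ‖∑ n ∈ Icc 1 N, f n‖ ≤ 1 + (Nat.log 3 (N/3) + 1) := by linarith
      rw [show ((Nat.log 3 N : ℝ) + 1) = 1 + ((Nat.log 3 (N/3) : ℝ) + 1) by
        rw [← hlog]; push_cast; ring]
      exact this

theorem stmt16 (f : ℕ → ℂ) (hf1 : f 1 = 1)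
    (hmul : ∀ m n : ℕ, f (m * n) = f m * f n)
    (ε : ℂ) (hε : ε = 1 ∨ ε = -1) (hf3 : f 3 = ε)
    (hf : ∀ p : ℕ, p.Prime → p ≠ 3 →
      f p = if p % 3 = 1 then 1 else if p % 3 = 2 then -1 else 0) :
    (fun x : ℝ => ∑ n ∈ Finset.Icc 1 ⌊x⌋₊, f n) =O[atTop]
      fun x : ℝ => Real.log x := by
  have hε1 : ‖ε‖ = 1 := by rcases hε with rfl|rfl <;> simp
  have hmulε : ∀ m, f (3*m) = ε * f m := fun m => by rw [hmul, hf3]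
  have hfg := fg16 f hf1 hmul hf
  have hrec := S_rec f ε hfg hmulε
  have hb := S_bound f ε hε1 hrec
  rw [isBigO_iff]
  refine ⟨1/Real.log 3 + 1, ?_⟩
  filter_upwards [eventually_ge_atTop (3:ℝ)] with x hx
  set N := ⌊x⌋₊ with hNdef
  have hx0 : (0:ℝ) ≤ x := by linarith
  have hN3 : 3 ≤ N := Nat.le_floor (by exact_mod_cast hx)
  have hlog3 : 1 < Real.log 3 := by
    rw [Real.lt_log_iff_exp_lt (by norm_num)]
    calc Real.exp 1 ≤ 2.7182818286 := le_of_lt Real.exp_one_lt_d9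
      _ < 3 := by norm_num
  have hlogx3 : Real.log 3 ≤ Real.log x := Real.log_le_log (by norm_num) hx
  have hpow : (3:ℕ)^(Nat.log 3 N) ≤ N := Nat.pow_log_le_self 3 (by omega)
  have hNx : (N:ℝ) ≤ x := Nat.floor_le hx0
  have h1 : (Nat.log 3 N : ℝ) * Real.log 3 ≤ Real.log x := by
    have hle : ((3:ℝ))^(Nat.log 3 N) ≤ x := by
      calc ((3:ℝ))^(Nat.log 3 N) = ((3^(Nat.log 3 N) : ℕ) : ℝ) := by push_cast; ring
        _ ≤ (N:ℝ) := by exact_mod_cast hpow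
        _ ≤ x := hNx
    calc (Nat.log 3 N : ℝ) * Real.log 3 = Real.log ((3:ℝ)^(Nat.log 3 N)) := by
          rw [Real.log_pow]
      _ ≤ Real.log x := Real.log_le_log (by positivity) hle
  have h2 : (Nat.log 3 N : ℝ) ≤ Real.log x / Real.log 3 := by
    rw [le_div_iff₀ (by linarith)]; exact h1
  have h3 : (1:ℝ) ≤ Real.log x := by linarith
  calc ‖∑ n ∈ Icc 1 N, f n‖ ≤ (Nat.log 3 N : ℝ) + 1 := hb N
    _ ≤ Real.log x / Real.log 3 + Real.log x := by linarith
    _ = (1/Real.log 3 + 1) * Real.log x := by ring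
    _ ≤ (1/Real.log 3 + 1) * ‖Real.log x‖ := by
        rw [Real.norm_eq_abs, abs_of_nonneg (by linarith)]
end

section
/- Let F(s) be a function holomorphic on Re(s) > 0 with |F(σ)| ≫ σ^{-N} as σ → 0⁺ for some integer N ≥ 1, and suppose F(s) = s ∫₁^∞ A(x) x^{-1-s} dx for all Re(s) > 0, where A : [1, ∞) → ℂ is locally integrable with A(x) = O((log x)^N). Then A(x) = Ω((log x)^N), i.e. limsup_{x→∞} |A(x)|/(log x)^N > 0. -/
open Filter Asymptotics MeasureTheory

private lemma logpow_contOn {σ : ℝ} (N : ℕ) :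
    ContinuousOn (fun x : ℝ => (Real.log x) ^ N * x ^ (-1 - σ)) (Set.Ioi 0) := by
  intro x hx
  exact (((Real.continuousAt_log hx.ne').pow N).mul
    (Real.continuousAt_rpow_const x _ (Or.inl hx.ne'))).continuousWithinAt

private lemma logpow_integrableOn (N : ℕ) {σ : ℝ} (hσ : 0 < σ) :
    IntegrableOn (fun x : ℝ => (Real.log x) ^ N * x ^ (-1 - σ)) (Set.Ici 1) := by
  have hcont : ContinuousOn (fun x : ℝ => (Real.log x) ^ N * x ^ (-1 - σ)) (Set.Ici 1) :=
    (logpow_contOn N).mono (fun x hx => Set.mem_Ioi.mpr (lt_of_lt_of_le one_pos hx))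
  have hlo : (fun x : ℝ => (Real.log x) ^ N * x ^ (-1 - σ)) =o[atTop]
      fun x : ℝ => x ^ (-1 - σ / 2) := by
    have h1 : (fun x : ℝ => (Real.log x) ^ N) =o[atTop] fun x : ℝ => x ^ (σ / 2) := by
      refine (isLittleO_log_rpow_rpow_atTop (N : ℝ) (half_pos hσ)).congr' ?_ (.refl _ _)
      filter_upwards [Real.tendsto_log_atTop.eventually_ge_atTop 0] with x hx
      rw [Real.rpow_natCast]
    refine (h1.mul_isBigO (isBigO_refl (fun x : ℝ => x ^ (-1 - σ)) atTop)).congr'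
      (.refl _ _) ?_
    filter_upwards [eventually_gt_atTop (0 : ℝ)] with x hx
    rw [← Real.rpow_add hx]
    ring_nf
  obtain ⟨C, hC⟩ := hlo.isBigO.bound
  obtain ⟨X₀, hX₀⟩ := eventually_atTop.mp hC
  set X : ℝ := max X₀ 1 with hXdef
  have hX1 : (1 : ℝ) ≤ X := le_max_right _ _
  have hIci : IntegrableOn (fun x : ℝ => (Real.log x) ^ N * x ^ (-1 - σ)) (Set.Ici X) := by
    have hint : IntegrableOn (fun x : ℝ => C * x ^ (-1 - σ / 2)) (Set.Ici X) := by
      rw [integrableOn_Ici_iff_integrableOn_Ioi]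
      exact (integrableOn_Ioi_rpow_of_lt (by linarith) (lt_of_lt_of_le one_pos hX1)).const_mul C
    refine Integrable.mono' hint ?_ ?_
    · exact ((hcont.mono (fun x hx => le_trans hX1 hx)).aestronglyMeasurable measurableSet_Ici)
    · filter_upwards [ae_restrict_mem measurableSet_Ici] with x hx
      have := hX₀ x (le_trans (le_max_left _ _) hx)
      refine this.trans ?_
      rw [Real.norm_rpow_of_nonneg (by linarith [le_trans hX1 hx])]
      rw [Real.norm_eq_abs, abs_of_nonneg (by linarith [le_trans hX1 hx])]
  have hIcc : IntegrableOn (fun x : ℝ => (Real.log x) ^ N * x ^ (-1 - σ)) (Set.Icc 1 X) :=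
    (hcont.mono Set.Icc_subset_Ici_self).integrableOn_Icc
  exact (hIcc.union hIci).mono_set (fun x hx =>
    (le_total x X).elim (fun h => Or.inl ⟨hx, h⟩) fun h => Or.inr h)

private lemma logpow_integral (N : ℕ) {σ : ℝ} (hσ : 0 < σ) :
    ∫ x in Set.Ioi (1 : ℝ), (Real.log x) ^ N * x ^ (-1 - σ)
      = Real.Gamma (N + 1) / σ ^ (N + 1) := by
  have hfun : ∀ t : ℝ,
      ((fun x : ℝ => (Real.log x) ^ N * x ^ (-1 - σ)) ∘ Real.exp) t * Real.exp t
        = t ^ N * Real.exp (-(σ * t)) := by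
    intro t
    simp only [Function.comp_apply, Real.log_exp]
    rw [Real.rpow_def_of_pos (Real.exp_pos t), Real.log_exp, mul_assoc, ← Real.exp_add]
    ring_nf
  have hsub : ∫ x in Set.Ioi (1 : ℝ), (Real.log x) ^ N * x ^ (-1 - σ)
      = ∫ t in Set.Ioi (0 : ℝ), t ^ N * Real.exp (-(σ * t)) := by
    have := MeasureTheory.integral_comp_mul_deriv_Ioi
      (f := Real.exp) (f' := Real.exp)
      (g := fun x : ℝ => (Real.log x) ^ N * x ^ (-1 - σ)) (a := 0)
      (Real.continuous_exp.continuousOn) Real.tendsto_exp_atTop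
      (fun x _ => (Real.hasDerivAt_exp x).hasDerivWithinAt)
      ((logpow_contOn N).mono (fun y hy => by
        obtain ⟨t, _, rfl⟩ := hy; exact Real.exp_pos t))
      ((logpow_integrableOn N hσ).mono_set (fun y hy => by
        obtain ⟨t, ht, rfl⟩ := hy; exact Real.one_le_exp ht))
      (by
        rw [show (fun x : ℝ =>
            ((fun x : ℝ => (Real.log x) ^ N * x ^ (-1 - σ)) ∘ Real.exp) x * Real.exp x)
            = fun t : ℝ => t ^ N * Real.exp (-(σ * t)) from funext hfun]
        rw [integrableOn_Ici_iff_integrableOn_Ioi]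
        refine (integrableOn_rpow_mul_exp_neg_mul_rpow
          (lt_of_lt_of_le neg_one_lt_zero (Nat.cast_nonneg N)) one_pos hσ).congr_fun
          (fun x hx => ?_) measurableSet_Ioi
        dsimp only
        rw [Real.rpow_one, Real.rpow_natCast, neg_mul])
    rw [Real.exp_zero] at this
    rw [← this]
    exact setIntegral_congr_fun measurableSet_Ioi fun t _ => (hfun t)
  rw [hsub]
  have hval := Real.integral_rpow_mul_exp_neg_mul_Ioi
    (a := (N : ℝ) + 1) (r := σ) (by positivity) hσ
  rw [show ((N : ℝ) + 1 - 1) = (N : ℝ) by ring] at hval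
  have : ∫ t in Set.Ioi (0 : ℝ), t ^ N * Real.exp (-(σ * t))
      = ∫ t in Set.Ioi (0 : ℝ), t ^ (N : ℝ) * Real.exp (-(σ * t)) :=
    setIntegral_congr_fun measurableSet_Ioi fun t _ => by rw [Real.rpow_natCast]
  rw [this, hval, show ((N : ℝ) + 1) = ((N + 1 : ℕ) : ℝ) from by push_cast; ring,
    Real.rpow_natCast, div_pow, one_pow, one_div, inv_mul_eq_div]


theorem stmt17 (F : ℂ → ℂ) (N : ℕ) (hN : 1 ≤ N)
    (hF : DifferentiableOn ℂ F {s : ℂ | 0 < s.re})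
    (hlow : ∃ c : ℝ, 0 < c ∧ ∃ σ₀ : ℝ, 0 < σ₀ ∧
      ∀ σ : ℝ, 0 < σ → σ < σ₀ → c / σ ^ N ≤ ‖F σ‖)
    (A : ℝ → ℂ) (hloc : LocallyIntegrableOn A (Set.Ici 1))
    (hA : A =O[atTop] fun x : ℝ => (Real.log x) ^ N)
    (hrepr : ∀ s : ℂ, 0 < s.re →
      F s = s * ∫ x in Set.Ioi (1 : ℝ), A x * (x : ℂ) ^ (-1 - s)) :
    0 < Filter.limsup (fun x : ℝ => ‖A x‖ / (Real.log x) ^ N) atTop := by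
  by_contra hL
  push_neg at hL
  obtain ⟨c, hc, σ₀, hσ₀, hlow⟩ := hlow
  have hΓ : 0 < Real.Gamma (N + 1) := Real.Gamma_pos_of_pos (by positivity)
  set ε : ℝ := c / (2 * Real.Gamma (N + 1)) with hεdef
  have hε : 0 < ε := by positivity
  -- boundedness of the limsup function
  obtain ⟨C, hC⟩ := hA.bound
  have hbdd : IsBoundedUnder (· ≤ ·) atTop (fun x : ℝ => ‖A x‖ / (Real.log x) ^ N) := by
    refine ⟨C, ?_⟩
    rw [eventually_map]
    filter_upwards [hC, eventually_ge_atTop (3 : ℝ)] with x hx h3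
    have hlog : 0 < Real.log x := Real.log_pos (by linarith)
    have hlogN : 0 < (Real.log x) ^ N := pow_pos hlog N
    rw [div_le_iff₀ hlogN]
    calc ‖A x‖ ≤ C * ‖(Real.log x) ^ N‖ := hx
      _ = C * (Real.log x) ^ N := by
          rw [Real.norm_eq_abs, abs_of_nonneg hlogN.le]
  have hev : ∀ᶠ x in atTop, ‖A x‖ / (Real.log x) ^ N < ε :=
    Filter.eventually_lt_of_limsup_lt (lt_of_le_of_lt hL hε) hbdd
  obtain ⟨X₀, hX₀⟩ := eventually_atTop.mp hev
  set X : ℝ := max X₀ 2 with hXdef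
  have hX2 : (2 : ℝ) ≤ X := le_max_right _ _
  have hX1 : (1 : ℝ) ≤ X := by linarith
  have hbound : ∀ x : ℝ, X ≤ x → ‖A x‖ ≤ ε * (Real.log x) ^ N := by
    intro x hx
    have hlog : 0 < Real.log x := Real.log_pos (by linarith)
    have hlogN : 0 < (Real.log x) ^ N := pow_pos hlog N
    have := hX₀ x (le_trans (le_max_left _ _) hx)
    rw [div_lt_iff₀ hlogN] at this
    linarith
  -- integrability of ‖A‖ on Ioc 1 X
  have hAmeas : AEStronglyMeasurable A (volume.restrict (Set.Ici 1)) :=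
    hloc.aestronglyMeasurable
  have hAint : IntegrableOn (fun x => ‖A x‖) (Set.Ioc 1 X) := by
    have h := (hloc.integrableOn_compact_subset
      (Set.Icc_subset_Ici_self : Set.Icc 1 X ⊆ Set.Ici 1) isCompact_Icc).norm
    exact IntegrableOn.mono_set h Set.Ioc_subset_Icc_self
  set M : ℝ := ∫ x in Set.Ioc (1 : ℝ) X, ‖A x‖ with hMdef
  have hM : 0 ≤ M := integral_nonneg (fun x => norm_nonneg _)
  -- The key estimate for each small σ
  have hkey : ∀ σ : ℝ, 0 < σ → σ < σ₀ → σ ≤ 1 → c / 2 ≤ σ * M := by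
    intro σ hσ hσ' hσ1
    have hre : (0 : ℝ) < ((σ : ℂ)).re := by simpa using hσ
    have h1 := hlow σ hσ hσ'
    rw [hrepr (σ : ℂ) hre] at h1
    set I : ℂ := ∫ x in Set.Ioi (1 : ℝ), A x * (x : ℂ) ^ (-1 - (σ : ℂ)) with hIdef
    have hnorm : ‖(σ : ℂ) * I‖ = σ * ‖I‖ := by
      rw [norm_mul, Complex.norm_real, Real.norm_eq_abs, abs_of_pos hσ]
    -- pointwise norm of the integrand
    have hptnorm : ∀ x : ℝ, x ∈ Set.Ioi (1 : ℝ) →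
        ‖A x * (x : ℂ) ^ (-1 - (σ : ℂ))‖ = ‖A x‖ * x ^ (-1 - σ) := by
      intro x hx
      have hx0 : 0 < x := lt_trans one_pos hx
      rw [norm_mul, Complex.norm_cpow_eq_rpow_re_of_pos hx0]
      norm_num
    set h : ℝ → ℝ := fun x => ‖A x‖ * x ^ (-1 - σ) with hhdef
    have hhmeas : AEStronglyMeasurable h (volume.restrict (Set.Ici 1)) := by
      refine (hAmeas.norm).mul ?_
      exact ((continuousOn_id.rpow_const (fun x hx =>
        Or.inl (ne_of_gt (lt_of_lt_of_le one_pos hx)))).aestronglyMeasurable measurableSet_Ici)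
    have hg₁int : IntegrableOn (fun x : ℝ => (Real.log x) ^ N * x ^ (-1 - σ)) (Set.Ioi 1) :=
      (logpow_integrableOn N hσ).mono_set Set.Ioi_subset_Ici_self
    -- h integrable on Ioc 1 X
    have hhIoc : IntegrableOn h (Set.Ioc 1 X) := by
      refine Integrable.mono' hAint
        (hhmeas.mono_measure (Measure.restrict_mono
          (fun y (hy : y ∈ Set.Ioc (1:ℝ) X) => hy.1.le) le_rfl)) ?_
      filter_upwards [ae_restrict_mem measurableSet_Ioc] with x hx
      have hx1 : (1 : ℝ) ≤ x := hx.1.le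
      have hrp : x ^ (-1 - σ) ≤ 1 :=
        Real.rpow_le_one_of_one_le_of_nonpos hx1 (by linarith)
      have hrp0 : 0 ≤ x ^ (-1 - σ) := Real.rpow_nonneg (by linarith) _
      rw [Real.norm_eq_abs, abs_of_nonneg (mul_nonneg (norm_nonneg _) hrp0)]
      calc ‖A x‖ * x ^ (-1 - σ) ≤ ‖A x‖ * 1 :=
            mul_le_mul_of_nonneg_left hrp (norm_nonneg _)
        _ = ‖A x‖ := mul_one _
    -- h integrable on Ioi X
    have hhIoi : IntegrableOn h (Set.Ioi X) := by
      refine Integrable.mono' ((hg₁int.mono_set (fun y hy =>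
          lt_of_le_of_lt (by linarith : (1:ℝ) < X).le hy)).const_mul ε)
        (hhmeas.mono_measure (Measure.restrict_mono
          (fun y hy => le_of_lt (lt_of_le_of_lt hX1 hy)) le_rfl)) ?_
      filter_upwards [ae_restrict_mem measurableSet_Ioi] with x hx
      have hx1 : (1 : ℝ) ≤ x := le_of_lt (lt_of_le_of_lt hX1 hx)
      have hrp0 : 0 ≤ x ^ (-1 - σ) := Real.rpow_nonneg (by linarith) _
      rw [Real.norm_eq_abs, abs_of_nonneg (mul_nonneg (norm_nonneg _) hrp0)]
      calc ‖A x‖ * x ^ (-1 - σ) ≤ (ε * (Real.log x) ^ N) * x ^ (-1 - σ) :=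
            mul_le_mul_of_nonneg_right (hbound x hx.le) hrp0
        _ = ε * ((Real.log x) ^ N * x ^ (-1 - σ)) := by ring
    have hsplit : ∫ x in Set.Ioi (1 : ℝ), h x
        = (∫ x in Set.Ioc (1 : ℝ) X, h x) + ∫ x in Set.Ioi X, h x := by
      rw [← Set.Ioc_union_Ioi_eq_Ioi hX1]
      exact setIntegral_union (Set.Ioc_disjoint_Ioi le_rfl) measurableSet_Ioi hhIoc hhIoi
    have hb1 : ∫ x in Set.Ioc (1 : ℝ) X, h x ≤ M := by
      refine setIntegral_mono_on hhIoc hAint measurableSet_Ioc (fun x hx => ?_)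
      have hrp : x ^ (-1 - σ) ≤ 1 :=
        Real.rpow_le_one_of_one_le_of_nonpos hx.1.le (by linarith)
      calc ‖A x‖ * x ^ (-1 - σ) ≤ ‖A x‖ * 1 :=
            mul_le_mul_of_nonneg_left hrp (norm_nonneg _)
        _ = ‖A x‖ := mul_one _
    have hb2 : ∫ x in Set.Ioi X, h x ≤ ε * (Real.Gamma (N + 1) / σ ^ (N + 1)) := by
      have step1 : ∫ x in Set.Ioi X, h x
          ≤ ∫ x in Set.Ioi X, ε * ((Real.log x) ^ N * x ^ (-1 - σ)) := by
        refine setIntegral_mono_on hhIoi ((hg₁int.mono_set (fun y hy =>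
            lt_of_le_of_lt (by linarith : (1:ℝ) < X).le hy)).const_mul ε)
          measurableSet_Ioi (fun x hx => ?_)
        have hrp0 : 0 ≤ x ^ (-1 - σ) :=
          Real.rpow_nonneg (by linarith [lt_of_le_of_lt hX1 hx]) _
        calc ‖A x‖ * x ^ (-1 - σ) ≤ (ε * (Real.log x) ^ N) * x ^ (-1 - σ) :=
              mul_le_mul_of_nonneg_right (hbound x hx.le) hrp0
          _ = ε * ((Real.log x) ^ N * x ^ (-1 - σ)) := by ring
      have step2 : ∫ x in Set.Ioi X, (Real.log x) ^ N * x ^ (-1 - σ)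
          ≤ ∫ x in Set.Ioi (1 : ℝ), (Real.log x) ^ N * x ^ (-1 - σ) := by
        refine setIntegral_mono_set hg₁int ?_ ?_
        · filter_upwards [ae_restrict_mem measurableSet_Ioi] with x hx
          have hx1 : (1 : ℝ) ≤ x := hx.le
          have hlog : 0 ≤ Real.log x := Real.log_nonneg hx1
          positivity
        · exact Filter.Eventually.of_forall (fun y hy =>
            lt_of_le_of_lt (by linarith : (1:ℝ) < X).le hy)
      calc ∫ x in Set.Ioi X, h x
          ≤ ∫ x in Set.Ioi X, ε * ((Real.log x) ^ N * x ^ (-1 - σ)) := step1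
        _ = ε * ∫ x in Set.Ioi X, (Real.log x) ^ N * x ^ (-1 - σ) := integral_const_mul ε _
        _ ≤ ε * ∫ x in Set.Ioi (1:ℝ), (Real.log x) ^ N * x ^ (-1 - σ) :=
            mul_le_mul_of_nonneg_left step2 hε.le
        _ = ε * (Real.Gamma (N + 1) / σ ^ (N + 1)) := by rw [logpow_integral N hσ]
    have hItotal : ‖I‖ ≤ M + ε * (Real.Gamma (N + 1) / σ ^ (N + 1)) := by
      calc ‖I‖ ≤ ∫ x in Set.Ioi (1 : ℝ), ‖A x * (x : ℂ) ^ (-1 - (σ : ℂ))‖ :=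
            norm_integral_le_integral_norm _
        _ = ∫ x in Set.Ioi (1 : ℝ), h x :=
            setIntegral_congr_fun measurableSet_Ioi hptnorm
        _ ≤ M + ε * (Real.Gamma (N + 1) / σ ^ (N + 1)) := by
            rw [hsplit]; exact add_le_add hb1 hb2
    have hσN : 0 < σ ^ N := pow_pos hσ N
    have hσN1 : (0:ℝ) < σ ^ (N + 1) := pow_pos hσ _
    have hstep : c / σ ^ N ≤ σ * (M + ε * (Real.Gamma (N + 1) / σ ^ (N + 1))) := by
      refine h1.trans ?_
      rw [hnorm]
      exact mul_le_mul_of_nonneg_left hItotal hσ.le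
    have hmul : c ≤ σ ^ (N + 1) * M + ε * Real.Gamma (N + 1) := by
      calc c = c / σ ^ N * σ ^ N := by field_simp
        _ ≤ σ * (M + ε * (Real.Gamma (N + 1) / σ ^ (N + 1))) * σ ^ N :=
            mul_le_mul_of_nonneg_right hstep hσN.le
        _ = σ ^ (N + 1) * M + ε * Real.Gamma (N + 1) := by
            rw [pow_succ]
            field_simp
    have hεΓ : ε * Real.Gamma (N + 1) = c / 2 := by
      rw [hεdef]
      field_simp
    have h4 : c / 2 ≤ σ ^ (N + 1) * M := by rw [hεΓ] at hmul; linarith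
    have h5 : σ ^ (N + 1) * M ≤ σ * M := by
      have hp : σ ^ (N + 1) ≤ σ := by
        calc σ ^ (N + 1) = σ * σ ^ N := by rw [pow_succ]; ring
          _ ≤ σ * 1 := mul_le_mul_of_nonneg_left (pow_le_one₀ hσ.le hσ1) hσ.le
          _ = σ := mul_one _
      exact mul_le_mul_of_nonneg_right hp hM
    linarith
  -- choose σ small to get a contradiction
  set σ : ℝ := min (min (σ₀ / 2) 1) (c / (4 * (M + 1))) with hσdef
  have hσpos : 0 < σ := by
    apply lt_min (lt_min (by linarith) one_pos)
    positivity
  have hσlt : σ < σ₀ := lt_of_le_of_lt ((min_le_left _ _).trans (min_le_left _ _)) (by linarith)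
  have hσ1 : σ ≤ 1 := (min_le_left _ _).trans (min_le_right _ _)
  have hσsmall : σ ≤ c / (4 * (M + 1)) := min_le_right _ _
  have : σ * M ≤ c / (4 * (M + 1)) * M := mul_le_mul_of_nonneg_right hσsmall hM
  have hlt : c / (4 * (M + 1)) * M < c / 2 := by
    rw [div_mul_eq_mul_div, div_lt_div_iff₀ (by positivity) (by norm_num)]
    nlinarith
  linarith [hkey σ hσpos hσlt hσ1]
end
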